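/- arXiv:2308.16302 — 6 statements merged into one kernel-verified Lean document; each statement's English description precedes it below -/
import Mathlib

section
/- Let N be a prime and let n1, n2 be integers with N ∤ n1 and N ∤ n2. Then Σ_{a mod N, gcd(a,N)=1} S(n1, a; N) · S(n2, a; N) equals φ(N)² + φ(N) − 1 if n1 ≡ n2 (mod N), and equals −φ(N) − 2 otherwise. -/
/-- `e(x/q)`-type additive character: for `x : ZMod q`, `eZMod q x = exp(2πi·x/q)`. -/
noncomputable def eZMod (q : ℕ) (x : ZMod q) : ℂ :=
  Complex.exp (2 * Real.pi * Complex.I * (x.val : ℂ) / (q : ℂ))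

/-- Kloosterman sum `S(m, n; q) = Σ_{d mod q, gcd(d,q)=1} e((m·d + n·d⁻¹)/q)`. -/
noncomputable def kloostermanS (q : ℕ) (m n : ZMod q) : ℂ :=
  ∑ d ∈ (Finset.range q).filter (fun d => Nat.gcd d q = 1),
    eZMod q (m * (d : ZMod q) + n * ((d : ZMod q)⁻¹))

/-- Gauss sum `G_χ(n) = Σ_{a mod q} χ(a) e(a·n/q)`. -/
noncomputable def gaussS (q : ℕ) (χ : DirichletCharacter ℂ q) (n : ZMod q) : ℂ :=
  ∑ a ∈ Finset.range q, χ (a : ZMod q) * eZMod q ((a : ZMod q) * n)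

/-- Ramanujan sum `R(n, q) = Σ_{a mod q, gcd(a,q)=1} e(a·n/q)`. -/
noncomputable def ramanujanS (q : ℕ) (n : ZMod q) : ℂ :=
  ∑ a ∈ (Finset.range q).filter (fun a => Nat.gcd a q = 1), eZMod q ((a : ZMod q) * n)

open Finset Complex

lemma eZMod_natCast {N : ℕ} [NeZero N] (a : ℕ) :
    eZMod N ((a : ZMod N)) = Complex.exp (2 * Real.pi * Complex.I * a / N) := by
  have hN : (N:ℂ) ≠ 0 := Nat.cast_ne_zero.mpr (NeZero.ne N)
  unfold eZMod
  rw [ZMod.val_natCast]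
  have ha : (a : ℂ) = ((a % N : ℕ) : ℂ) + (N : ℂ) * ((a / N : ℕ) : ℂ) := by
    exact_mod_cast congrArg (Nat.cast : ℕ → ℂ) (Nat.mod_add_div a N).symm
  rw [ha]
  set k : ℂ := ((a / N : ℕ) : ℂ) with hk
  have : 2 * (Real.pi:ℂ) * Complex.I * (((a % N : ℕ) : ℂ) + (N : ℂ) * k) / N
      = 2 * (Real.pi:ℂ) * Complex.I * ((a % N : ℕ) : ℂ) / N + k * (2 * (Real.pi:ℂ) * Complex.I) := by
    field_simp
  rw [this, Complex.exp_add]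
  have h1 : Complex.exp (k * (2 * (Real.pi:ℂ) * Complex.I)) = 1 := by
    rw [hk]
    exact_mod_cast Complex.exp_int_mul_two_pi_mul_I ((a / N : ℕ) : ℤ)
  rw [h1, mul_one]

lemma eZMod_add {N : ℕ} [NeZero N] (x y : ZMod N) :
    eZMod N (x + y) = eZMod N x * eZMod N y := by
  have hN : (N:ℂ) ≠ 0 := Nat.cast_ne_zero.mpr (NeZero.ne N)
  have hx : x = ((x.val : ℕ) : ZMod N) := (ZMod.natCast_rightInverse x).symm
  have hy : y = ((y.val : ℕ) : ZMod N) := (ZMod.natCast_rightInverse y).symm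
  rw [hx, hy, ← Nat.cast_add, eZMod_natCast, eZMod_natCast, eZMod_natCast, ← Complex.exp_add]
  congr 1
  push_cast
  field_simp

lemma eZMod_zero {N : ℕ} [NeZero N] : eZMod N 0 = 1 := by
  simp [eZMod]

/-- reindexing: sum over `range N` (with condition) equals sum over `ZMod N`. -/
lemma sum_range_eq_sum_zmod {N : ℕ} [NeZero N] (f : ZMod N → ℂ) :
    ∑ a ∈ Finset.range N, f (a : ZMod N) = ∑ x : ZMod N, f x := by
  refine Finset.sum_nbij' (fun a => (a : ZMod N)) (fun x => x.val) ?_ ?_ ?_ ?_ ?_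
  · intro a _; exact mem_univ _
  · intro x _; exact mem_range.mpr (ZMod.val_lt x)
  · intro a ha; exact ZMod.val_cast_of_lt (mem_range.mp ha)
  · intro x _; exact ZMod.natCast_rightInverse x
  · intro a _; rfl

lemma sum_filter_eq_sum_ne_zero {N : ℕ} [NeZero N] (hN : N.Prime) (f : ZMod N → ℂ) :
    ∑ a ∈ (Finset.range N).filter (fun a => Nat.gcd a N = 1), f (a : ZMod N)
      = ∑ x ∈ Finset.univ \ {(0 : ZMod N)}, f x := by
  refine Finset.sum_nbij' (fun a => (a : ZMod N)) (fun x => x.val) ?_ ?_ ?_ ?_ ?_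
  · intro a ha
    rw [mem_filter, mem_range] at ha
    rw [mem_sdiff, mem_singleton]
    refine ⟨mem_univ _, fun h0 => ?_⟩
    have hd : N ∣ a := (ZMod.natCast_eq_zero_iff a N).mp h0
    have : N ∣ Nat.gcd a N := Nat.dvd_gcd hd dvd_rfl
    rw [ha.2] at this
    have := Nat.le_of_dvd Nat.one_pos this
    have := hN.one_lt
    omega
  · intro x hx
    rw [mem_sdiff, mem_singleton] at hx
    rw [mem_filter, mem_range]
    refine ⟨ZMod.val_lt x, ?_⟩
    have hnd : ¬ N ∣ x.val := by
      intro hd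
      have : (x.val : ZMod N) = 0 := (ZMod.natCast_eq_zero_iff _ N).mpr hd
      rw [ZMod.natCast_rightInverse x] at this
      exact hx.2 this
    exact Nat.Coprime.gcd_eq_one ((Nat.coprime_comm).mp (hN.coprime_iff_not_dvd.mpr hnd))
  · intro a ha; exact ZMod.val_cast_of_lt (mem_range.mp (mem_filter.mp ha).1)
  · intro x _; exact ZMod.natCast_rightInverse x
  · intro a _; rfl

lemma sum_eZMod_univ {N : ℕ} [NeZero N] (hN : 1 < N) : ∑ x : ZMod N, eZMod N x = 0 := by
  have hNC : (N:ℂ) ≠ 0 := Nat.cast_ne_zero.mpr (NeZero.ne N)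
  rw [← sum_range_eq_sum_zmod (eZMod N)]
  set ζ : ℂ := Complex.exp (2 * Real.pi * Complex.I / N) with hζ
  have hterm : ∀ a ∈ Finset.range N, eZMod N ((a : ZMod N)) = ζ ^ a := by
    intro a _
    rw [eZMod_natCast, hζ, ← Complex.exp_nat_mul]
    congr 1
    ring
  rw [Finset.sum_congr rfl hterm]
  have hζN : ζ ^ N = 1 := by
    rw [hζ, ← Complex.exp_nat_mul]
    have : (N:ℂ) * (2 * Real.pi * Complex.I / N) = 2 * Real.pi * Complex.I := by
      field_simp
    rw [this, Complex.exp_two_pi_mul_I]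
  have hζ1 : ζ ≠ 1 := by
    intro h
    rw [hζ, Complex.exp_eq_one_iff] at h
    obtain ⟨n, hn⟩ := h
    have h2 : (2 * (Real.pi:ℂ) * Complex.I) ≠ 0 := by
      simp [Real.pi_ne_zero, Complex.I_ne_zero]
    have key : (n:ℂ) * N = 1 := by
      have h' : (n:ℂ) * N * (2 * (Real.pi:ℂ) * Complex.I)
          = 1 * (2 * (Real.pi:ℂ) * Complex.I) := by
        calc (n:ℂ) * N * (2 * (Real.pi:ℂ) * Complex.I)
            = (N:ℂ) * ((n:ℂ) * (2 * (Real.pi:ℂ) * Complex.I)) := by ring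
          _ = (N:ℂ) * (2 * (Real.pi:ℂ) * Complex.I / N) := by rw [← hn]
          _ = 1 * (2 * (Real.pi:ℂ) * Complex.I) := by field_simp
      exact mul_right_cancel₀ h2 h'
    have hint : (n * N : ℤ) = 1 := by exact_mod_cast key
    have hdvd : (N:ℤ) ∣ 1 := ⟨n, by linarith⟩
    have := Int.le_of_dvd one_pos hdvd
    omega
  rw [geom_sum_eq hζ1, hζN]
  simp

lemma sum_eZMod_mul_eq {N : ℕ} [NeZero N] (hN : N.Prime) {c : ZMod N} (hc : c ≠ 0) :
    ∑ x : ZMod N, eZMod N (x * c) = 0 := by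
  haveI : Fact N.Prime := ⟨hN⟩
  rw [Fintype.sum_bijective (fun x : ZMod N => x * c) (Equiv.mulRight₀ c hc).bijective _
    (eZMod N) (fun x => rfl)]
  exact sum_eZMod_univ hN.one_lt

lemma ramanujan_prime {N : ℕ} [NeZero N] (hN : N.Prime) (c : ZMod N) :
    ∑ x ∈ Finset.univ \ {(0 : ZMod N)}, eZMod N (x * c)
      = if c = 0 then (N:ℂ) - 1 else -1 := by
  haveI : Fact N.Prime := ⟨hN⟩
  have hsplit : ∑ x : ZMod N, eZMod N (x * c)
      = ∑ x ∈ Finset.univ \ {(0:ZMod N)}, eZMod N (x * c) + eZMod N (0 * c) :=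
    Finset.sum_eq_sum_sdiff_singleton_add (mem_univ 0) _
  by_cases h : c = 0
  · subst h
    rw [if_pos rfl]
    have : ∀ x ∈ Finset.univ \ {(0:ZMod N)}, eZMod N (x * 0) = 1 := by
      intro x _; rw [mul_zero, eZMod_zero]
    rw [Finset.sum_congr rfl this, Finset.sum_const, nsmul_eq_mul, mul_one]
    have hcard : (Finset.univ \ {(0:ZMod N)}).card = N - 1 := by
      rw [Finset.card_sdiff_of_subset (by simp), Finset.card_singleton, Finset.card_univ, ZMod.card]
    rw [hcard, Nat.cast_sub hN.one_le, Nat.cast_one]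
  · rw [if_neg h]
    rw [sum_eZMod_mul_eq hN h, zero_mul, eZMod_zero] at hsplit
    linear_combination -hsplit

lemma sum_units_e {N : ℕ} [NeZero N] (hN : N.Prime) {m : ZMod N} (hm : m ≠ 0) :
    ∑ d ∈ Finset.univ \ {(0 : ZMod N)}, eZMod N (m * d) = -1 := by
  have hcomm : ∀ d ∈ Finset.univ \ {(0:ZMod N)}, eZMod N (m * d) = eZMod N (d * m) := by
    intro d _; rw [mul_comm]
  rw [Finset.sum_congr rfl hcomm, ramanujan_prime hN m, if_neg hm]

lemma kloosterman_eq {N : ℕ} [NeZero N] (hN : N.Prime) (m n : ZMod N) :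
    kloostermanS N m n = ∑ d ∈ Finset.univ \ {(0 : ZMod N)}, eZMod N (m * d + n * d⁻¹) :=
  sum_filter_eq_sum_ne_zero hN (fun x => eZMod N (m * x + n * x⁻¹))

lemma inv_add_inv_eq_zero_iff {N : ℕ} [Fact N.Prime] {d1 d2 : ZMod N}
    (_h1 : d1 ≠ 0) : (d1⁻¹ + d2⁻¹ = 0) ↔ d2 = -d1 := by
  constructor
  · intro h
    have : d2⁻¹ = (-d1)⁻¹ := by rw [inv_neg]; linear_combination h
    exact inv_injective this
  · rintro rfl
    rw [inv_neg]
    ring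


/-- For `N` prime and `n1, n2` not divisible by `N`,
`Σ_{a mod N, gcd(a,N)=1} S(n1,a;N)·S(n2,a;N)` equals `φ(N)² + φ(N) − 1` if
`n1 ≡ n2 (mod N)`, and `−φ(N) − 2` otherwise. -/
theorem stmt1 (N : ℕ) (hN : N.Prime) (n1 n2 : ℤ)
    (h1 : ¬ (N : ℤ) ∣ n1) (h2 : ¬ (N : ℤ) ∣ n2) :
    ∑ a ∈ (Finset.range N).filter (fun a => Nat.gcd a N = 1),
        kloostermanS N (n1 : ZMod N) ((a : ℕ) : ZMod N) *
          kloostermanS N (n2 : ZMod N) ((a : ℕ) : ZMod N) =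
      if (N : ℤ) ∣ n1 - n2 then (N.totient : ℂ) ^ 2 + (N.totient : ℂ) - 1
      else -(N.totient : ℂ) - 2 := by
  haveI : NeZero N := ⟨hN.ne_zero⟩
  haveI : Fact N.Prime := ⟨hN⟩
  set m1 : ZMod N := (n1 : ZMod N) with hm1def
  set m2 : ZMod N := (n2 : ZMod N) with hm2def
  have hm1 : m1 ≠ 0 := fun h => h1 ((ZMod.intCast_zmod_eq_zero_iff_dvd n1 N).mp h)
  have hm2 : m2 ≠ 0 := fun h => h2 ((ZMod.intCast_zmod_eq_zero_iff_dvd n2 N).mp h)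
  set S : Finset (ZMod N) := Finset.univ \ {(0 : ZMod N)} with hS
  have step1 : ∑ a ∈ (Finset.range N).filter (fun a => Nat.gcd a N = 1),
        kloostermanS N m1 ((a : ℕ) : ZMod N) * kloostermanS N m2 ((a : ℕ) : ZMod N)
      = ∑ a ∈ S, kloostermanS N m1 a * kloostermanS N m2 a :=
    sum_filter_eq_sum_ne_zero hN (fun a => kloostermanS N m1 a * kloostermanS N m2 a)
  rw [step1]
  have step2 : ∑ a ∈ S, kloostermanS N m1 a * kloostermanS N m2 a
      = ∑ d1 ∈ S, ∑ d2 ∈ S, eZMod N (m1 * d1 + m2 * d2)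
          * ∑ a ∈ S, eZMod N (a * (d1⁻¹ + d2⁻¹)) := by
    calc ∑ a ∈ S, kloostermanS N m1 a * kloostermanS N m2 a
        = ∑ a ∈ S, ∑ d1 ∈ S, ∑ d2 ∈ S,
            eZMod N (m1 * d1 + m2 * d2) * eZMod N (a * (d1⁻¹ + d2⁻¹)) := by
          refine Finset.sum_congr rfl fun a _ => ?_
          rw [kloosterman_eq hN, kloosterman_eq hN, Finset.sum_mul_sum]
          refine Finset.sum_congr rfl fun d1 _ => Finset.sum_congr rfl fun d2 _ => ?_
          rw [← eZMod_add, ← eZMod_add]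
          congr 1
          ring
      _ = ∑ d1 ∈ S, ∑ d2 ∈ S, eZMod N (m1 * d1 + m2 * d2)
            * ∑ a ∈ S, eZMod N (a * (d1⁻¹ + d2⁻¹)) := by
          rw [Finset.sum_comm]
          refine Finset.sum_congr rfl fun d1 _ => ?_
          rw [Finset.sum_comm]
          refine Finset.sum_congr rfl fun d2 _ => ?_
          rw [Finset.mul_sum]
  rw [step2]
  have step3 : ∑ d1 ∈ S, ∑ d2 ∈ S, eZMod N (m1 * d1 + m2 * d2)
          * ∑ a ∈ S, eZMod N (a * (d1⁻¹ + d2⁻¹))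
      = ∑ d1 ∈ S, ((N:ℂ) * eZMod N ((m1 - m2) * d1) + eZMod N (m1 * d1)) := by
    refine Finset.sum_congr rfl fun d1 hd1 => ?_
    have hd1' : d1 ≠ 0 := by
      rw [hS, Finset.mem_sdiff, Finset.mem_singleton] at hd1; exact hd1.2
    have inner : ∀ d2 ∈ S, eZMod N (m1 * d1 + m2 * d2)
          * (∑ a ∈ S, eZMod N (a * (d1⁻¹ + d2⁻¹)))
        = (if d2 = -d1 then (N:ℂ) * eZMod N (m1 * d1 + m2 * d2) else 0)
            - eZMod N (m1 * d1 + m2 * d2) := by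
      intro d2 _
      rw [ramanujan_prime hN]
      by_cases hcase : d2 = -d1
      · rw [if_pos ((inv_add_inv_eq_zero_iff hd1').mpr hcase), if_pos hcase]
        ring
      · rw [if_neg (fun h => hcase ((inv_add_inv_eq_zero_iff hd1').mp h)), if_neg hcase]
        ring
    rw [Finset.sum_congr rfl inner, Finset.sum_sub_distrib, Finset.sum_ite_eq']
    have hmem : -d1 ∈ S := by
      rw [hS, Finset.mem_sdiff, Finset.mem_singleton]
      exact ⟨Finset.mem_univ _, by simpa using hd1'⟩
    rw [if_pos hmem]
    have heq1 : eZMod N (m1 * d1 + m2 * (-d1)) = eZMod N ((m1 - m2) * d1) := by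
      congr 1; ring
    have heq2 : ∑ d2 ∈ S, eZMod N (m1 * d1 + m2 * d2)
        = eZMod N (m1 * d1) * ∑ d2 ∈ S, eZMod N (m2 * d2) := by
      rw [Finset.mul_sum]
      exact Finset.sum_congr rfl fun d2 _ => eZMod_add _ _
    rw [heq1, heq2, sum_units_e hN hm2]
    ring
  rw [step3, Finset.sum_add_distrib, ← Finset.mul_sum, sum_units_e hN hm1]
  have hram : ∑ d1 ∈ S, eZMod N ((m1 - m2) * d1)
      = if m1 - m2 = 0 then (N:ℂ) - 1 else -1 := by
    have : ∀ d1 ∈ S, eZMod N ((m1 - m2) * d1) = eZMod N (d1 * (m1 - m2)) := by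
      intro d _; rw [mul_comm]
    rw [Finset.sum_congr rfl this]
    exact ramanujan_prime hN (m1 - m2)
  rw [hram]
  have hcond : ((N : ℤ) ∣ n1 - n2) ↔ m1 - m2 = 0 := by
    rw [← ZMod.intCast_zmod_eq_zero_iff_dvd]
    push_cast
    rw [hm1def, hm2def]
  have ht : (N.totient : ℂ) = (N : ℂ) - 1 := by
    rw [Nat.totient_prime hN, Nat.cast_sub hN.one_le, Nat.cast_one]
  by_cases hd : (N : ℤ) ∣ n1 - n2
  · rw [if_pos hd, if_pos (hcond.mp hd), ht]
    ring
  · rw [if_neg hd, if_neg (fun h => hd (hcond.mpr h)), ht]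
    ring
end

section
/- Let N be a prime, n1, n2 integers, and χ a Dirichlet character modulo N. Then Σ_{u1 mod N, gcd(u1,N)=1} Σ_{u2 mod N, gcd(u2,N)=1} e((n1·u1⁻¹ + n2·u2⁻¹)/N) · conj(χ)(u1 + u2) = Σ_{u mod N, gcd(u,N)=1} conj(χ)(u+1) · G_χ(n1·u⁻¹ + n2), where u⁻¹ denotes the inverse modulo N. -/
lemma sum_units_aux {N : ℕ} [NeZero N] (f : ZMod N → ℂ) :
    ∑ u ∈ (Finset.range N).filter (fun u => Nat.gcd u N = 1), f ((u : ℕ) : ZMod N)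
      = ∑ x : (ZMod N)ˣ, f (x : ZMod N) := by
  refine Finset.sum_bij'
    (fun u hu => ZMod.unitOfCoprime u (by simpa using (Finset.mem_filter.mp hu).2))
    (fun x _ => (x : ZMod N).val) ?_ ?_ ?_ ?_ ?_
  · intros; exact Finset.mem_univ _
  · intro x _
    simp only [Finset.mem_filter, Finset.mem_range]
    exact ⟨ZMod.val_lt _, ZMod.val_coe_unit_coprime x⟩
  · intro u hu
    simp only [ZMod.coe_unitOfCoprime]
    exact ZMod.val_natCast_of_lt (Finset.mem_range.mp (Finset.mem_filter.mp hu).1)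
  · intro x _
    ext
    simp [ZMod.coe_unitOfCoprime, ZMod.natCast_val, ZMod.cast_id]
  · intro u hu
    rw [ZMod.coe_unitOfCoprime]

lemma conj_chi_aux {N : ℕ} (hN : N.Prime) (χ : DirichletCharacter ℂ N) (a : ZMod N) :
    (starRingEnd ℂ) (χ a) = χ a⁻¹ := by
  haveI : Fact N.Prime := ⟨hN⟩
  rw [show (starRingEnd ℂ) (χ a) = star (χ a) from rfl, MulChar.star_apply' χ a,
    MulChar.inv_apply']

lemma gaussS_units {N : ℕ} [NeZero N] (hN : N.Prime) (χ : DirichletCharacter ℂ N) (m : ZMod N) :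
    gaussS N χ m = ∑ x : (ZMod N)ˣ, χ (x : ZMod N) * eZMod N ((x : ZMod N) * m) := by
  haveI : Fact N.Prime := ⟨hN⟩
  rw [gaussS, ← Finset.sum_filter_of_ne (p := fun u => Nat.gcd u N = 1)
    (fun a _ h => by
      by_contra hg
      apply h
      have : ¬ IsUnit ((a : ℕ) : ZMod N) := by
        rw [ZMod.isUnit_iff_coprime]; exact hg
      rw [MulChar.map_nonunit χ this, zero_mul]),
    sum_units_aux (f := fun z => χ z * eZMod N (z * m))]

/-- For `N` prime, integers `n1, n2` and a Dirichlet character `χ` mod `N`: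
`Σ_{u1,u2 mod N, coprime to N} e((n1 u1⁻¹ + n2 u2⁻¹)/N) conj(χ)(u1+u2)
  = Σ_{u mod N, (u,N)=1} conj(χ)(u+1) G_χ(n1 u⁻¹ + n2)`. -/
theorem stmt4 (N : ℕ) (hN : N.Prime) (n1 n2 : ℤ) (χ : DirichletCharacter ℂ N) :
    ∑ u1 ∈ (Finset.range N).filter (fun u => Nat.gcd u N = 1),
      ∑ u2 ∈ (Finset.range N).filter (fun u => Nat.gcd u N = 1),
        eZMod N ((n1 : ZMod N) * (((u1 : ℕ) : ZMod N))⁻¹ +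
            (n2 : ZMod N) * (((u2 : ℕ) : ZMod N))⁻¹) *
          (starRingEnd ℂ) (χ (((u1 : ℕ) : ZMod N) + ((u2 : ℕ) : ZMod N))) =
      ∑ u ∈ (Finset.range N).filter (fun u => Nat.gcd u N = 1),
        (starRingEnd ℂ) (χ (((u : ℕ) : ZMod N) + 1)) *
          gaussS N χ ((n1 : ZMod N) * (((u : ℕ) : ZMod N))⁻¹ + (n2 : ZMod N)) := by
  haveI : Fact N.Prime := ⟨hN⟩
  rw [sum_units_aux (f := fun z1 =>
    ∑ u2 ∈ (Finset.range N).filter (fun u => Nat.gcd u N = 1),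
      eZMod N ((n1 : ZMod N) * z1⁻¹ + (n2 : ZMod N) * (((u2 : ℕ) : ZMod N))⁻¹) *
        (starRingEnd ℂ) (χ (z1 + ((u2 : ℕ) : ZMod N)))),
    sum_units_aux (f := fun z =>
      (starRingEnd ℂ) (χ (z + 1)) * gaussS N χ ((n1 : ZMod N) * z⁻¹ + (n2 : ZMod N)))]
  have hinner : (∑ x : (ZMod N)ˣ,
      ∑ u2 ∈ (Finset.range N).filter (fun u => Nat.gcd u N = 1),
        eZMod N ((n1 : ZMod N) * ((x : ZMod N))⁻¹ + (n2 : ZMod N) * (((u2 : ℕ) : ZMod N))⁻¹) *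
          (starRingEnd ℂ) (χ ((x : ZMod N) + ((u2 : ℕ) : ZMod N)))) =
      ∑ x : (ZMod N)ˣ, ∑ x2 : (ZMod N)ˣ,
        eZMod N ((n1 : ZMod N) * ((x : ZMod N))⁻¹ + (n2 : ZMod N) * ((x2 : ZMod N))⁻¹) *
          (starRingEnd ℂ) (χ ((x : ZMod N) + (x2 : ZMod N))) :=
    Finset.sum_congr rfl fun x1 _ => sum_units_aux (f := fun z2 =>
      eZMod N ((n1 : ZMod N) * ((x1 : ZMod N))⁻¹ + (n2 : ZMod N) * z2⁻¹) *
        (starRingEnd ℂ) (χ ((x1 : ZMod N) + z2)))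
  rw [hinner, Finset.sum_comm]
  -- now reindex x1 = x * x2 in inner sum
  calc ∑ x2 : (ZMod N)ˣ, ∑ x1 : (ZMod N)ˣ,
        eZMod N ((n1 : ZMod N) * ((x1 : ZMod N))⁻¹ + (n2 : ZMod N) * ((x2 : ZMod N))⁻¹) *
          (starRingEnd ℂ) (χ ((x1 : ZMod N) + (x2 : ZMod N)))
      = ∑ x2 : (ZMod N)ˣ, ∑ x : (ZMod N)ˣ,
        (starRingEnd ℂ) (χ ((x : ZMod N) + 1)) *
          ((starRingEnd ℂ) (χ (x2 : ZMod N)) *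
            eZMod N (((n1 : ZMod N) * ((x : ZMod N))⁻¹ + (n2 : ZMod N)) * ((x2 : ZMod N))⁻¹)) := by
        refine Finset.sum_congr rfl fun x2 _ => ?_
        refine (Finset.sum_equiv (Equiv.mulRight x2) (by simp) fun x _ => ?_).symm
        simp only [Equiv.coe_mulRight, Units.val_mul, mul_inv]
        rw [show (n1 : ZMod N) * (((x : ZMod N))⁻¹ * ((x2 : ZMod N))⁻¹) +
            (n2 : ZMod N) * ((x2 : ZMod N))⁻¹ =
          ((n1 : ZMod N) * ((x : ZMod N))⁻¹ + (n2 : ZMod N)) * ((x2 : ZMod N))⁻¹ by ring,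
          show (x : ZMod N) * (x2 : ZMod N) + (x2 : ZMod N) =
            ((x : ZMod N) + 1) * (x2 : ZMod N) by ring, map_mul, map_mul]
        ring
    _ = ∑ x : (ZMod N)ˣ,
        (starRingEnd ℂ) (χ ((x : ZMod N) + 1)) *
          gaussS N χ ((n1 : ZMod N) * ((x : ZMod N))⁻¹ + (n2 : ZMod N)) := by
        rw [Finset.sum_comm]
        refine Finset.sum_congr rfl fun x _ => ?_
        rw [← Finset.mul_sum]
        congr 1
        rw [gaussS_units hN]
        refine Finset.sum_equiv (Equiv.inv _) (by simp) fun x2 _ => ?_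
        simp only [Equiv.inv_apply]
        rw [show ((↑(x2⁻¹) : ZMod N)) = ((x2 : ZMod N))⁻¹ from (ZMod.inv_coe_unit x2).symm,
          conj_chi_aux hN,
          mul_comm ((n1 : ZMod N) * ((x : ZMod N))⁻¹ + (n2 : ZMod N)) (((x2 : ZMod N))⁻¹)]
end

section
/- Let r and b be positive integers with r | b, and set r1 := (b, r^∞), the largest divisor of b all of whose prime factors divide r (equivalently, r1 = gcd(b, r^n) for all sufficiently large n). Let χ be a Dirichlet character modulo r and let χ1 be the Dirichlet character modulo b induced by χ (so χ1(u) = χ(u mod r) when gcd(u,b)=1 and χ1(u)=0 otherwise). Then for any integer m: if r1 | m²r, then G_{χ1}(m²) = χ(b/r1) · R(m², b/r1) · (r1/r) · G_χ(m²r/r1); otherwise G_{χ1}(m²) = 0. -/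
open Finset

noncomputable def EE (q : ℕ) (v : ℤ) : ℂ :=
  Complex.exp (2 * Real.pi * Complex.I * (v : ℂ) / (q : ℂ))

lemma EE_congr {q : ℕ} (hq : q ≠ 0) {v w : ℤ} (h : v ≡ w [ZMOD q]) : EE q v = EE q w := by
  obtain ⟨k, hk⟩ := (Int.ModEq.dvd h)
  obtain ⟨j, hv⟩ : ∃ j : ℤ, v = w + q * j := ⟨-k, by linarith⟩
  have hqc : (q : ℂ) ≠ 0 := Nat.cast_ne_zero.mpr hq
  rw [hv, EE, EE]
  push_cast
  rw [show 2 * (Real.pi:ℂ) * Complex.I * ((w:ℂ) + q * j) / q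
      = 2 * Real.pi * Complex.I * w / q + j * (2 * Real.pi * Complex.I) by field_simp,
    Complex.exp_add, Complex.exp_int_mul_two_pi_mul_I, mul_one]

lemma EE_mul_left {a : ℕ} (q : ℕ) (ha : a ≠ 0) (v : ℤ) : EE (a * q) (a * v) = EE q v := by
  rcases Nat.eq_zero_or_pos q with rfl | hq
  · simp [EE]
  have hac : (a : ℂ) ≠ 0 := Nat.cast_ne_zero.mpr ha
  have hqc : (q : ℂ) ≠ 0 := Nat.cast_ne_zero.mpr hq.ne'
  unfold EE
  congr 1
  push_cast
  field_simp

lemma EE_split {r1 b2 : ℕ} (h1 : r1 ≠ 0) (h2 : b2 ≠ 0) {c d : ℤ}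
    (h : c * b2 + d * r1 = 1) (w : ℤ) :
    EE (r1 * b2) w = EE r1 (c * w) * EE b2 (d * w) := by
  have h1c : (r1 : ℂ) ≠ 0 := Nat.cast_ne_zero.mpr h1
  have h2c : (b2 : ℂ) ≠ 0 := Nat.cast_ne_zero.mpr h2
  have hC : (c : ℂ) * b2 + d * r1 = 1 := by exact_mod_cast congrArg (Int.cast : ℤ → ℂ) h
  rw [EE, EE, EE, ← Complex.exp_add]
  congr 1
  push_cast
  field_simp
  linear_combination (-(w:ℂ)) * hC

lemma EE_add (q : ℕ) (v w : ℤ) : EE q (v + w) = EE q v * EE q w := by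
  rcases Nat.eq_zero_or_pos q with rfl | hq
  · simp [EE]
  have hqc : (q : ℂ) ≠ 0 := Nat.cast_ne_zero.mpr hq.ne'
  rw [EE, EE, EE, ← Complex.exp_add]
  congr 1
  push_cast
  field_simp

lemma EE_geom {t : ℕ} (ht : 0 < t) (n : ℤ) :
    ∑ s ∈ range t, EE t (n * s) = if (t:ℤ) ∣ n then (t:ℂ) else 0 := by
  have hz : ∀ s : ℕ, EE t (n * s) = (EE t n) ^ s := by
    intro s
    rw [EE, EE, ← Complex.exp_nat_mul]
    congr 1
    push_cast
    ring
  simp_rw [hz]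
  by_cases hd : (t:ℤ) ∣ n
  · have h1 : EE t n = 1 := by
      rw [EE_congr ht.ne' ((Int.modEq_zero_iff_dvd).mpr hd)]
      simp [EE]
    simp [h1, hd]
  · have htc : (t : ℂ) ≠ 0 := Nat.cast_ne_zero.mpr ht.ne'
    have h1 : EE t n ≠ 1 := by
      rw [EE]
      intro hcon
      rw [Complex.exp_eq_one_iff] at hcon
      obtain ⟨k, hk⟩ := hcon
      apply hd
      refine ⟨k, ?_⟩
      have h2 : (n : ℂ) = t * k := by
        have hpi : (2 * (Real.pi:ℂ) * Complex.I) ≠ 0 := by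
          simp [Real.pi_ne_zero, Complex.I_ne_zero]
        field_simp at hk
        apply mul_left_cancel₀ hpi
        linear_combination (2 * (Real.pi:ℂ) * Complex.I) * hk
      exact_mod_cast h2
    rw [geom_sum_eq h1]
    have h2 : (EE t n) ^ t = 1 := by
      rw [EE, ← Complex.exp_nat_mul]
      rw [show (t:ℂ) * (2 * Real.pi * Complex.I * n / t) = n * (2 * Real.pi * Complex.I) by
        field_simp]
      exact Complex.exp_int_mul_two_pi_mul_I n
    simp [h2, hd]

lemma eZMod_intCast {q : ℕ} [NeZero q] (v : ℤ) : eZMod q ((v : ZMod q)) = EE q v := by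
  have h1 : eZMod q ((v : ZMod q)) = EE q (v % q) := by
    have hval : (((v : ZMod q).val : ℕ) : ℂ) = ((v % q : ℤ) : ℂ) := by
      exact_mod_cast congrArg (fun z : ℤ => (z : ℂ)) (ZMod.val_intCast v)
    rw [eZMod, EE, hval]
  rw [h1]
  exact EE_congr (NeZero.ne q) (Int.emod_emod_of_dvd v dvd_rfl)

lemma eZMod_mul {q : ℕ} [NeZero q] (x : ZMod q) (n : ℤ) :
    eZMod q (x * (n : ZMod q)) = EE q (x.val * n) := by
  have hx : ((x.val : ℤ) : ZMod q) = x := by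
    push_cast
    exact ZMod.natCast_rightInverse x
  have : x * (n : ZMod q) = (((x.val : ℤ) * n : ℤ) : ZMod q) := by
    push_cast [hx]
    ring
  rw [this, eZMod_intCast]

lemma sum_range_zmod {q : ℕ} [NeZero q] (f : ZMod q → ℂ) :
    ∑ a ∈ Finset.range q, f (a : ZMod q) = ∑ x : ZMod q, f x := by
  refine Finset.sum_nbij' (fun a => (a : ZMod q)) (fun x => x.val) ?_ ?_ ?_ ?_ ?_
  · intro a _; exact Finset.mem_univ _
  · intro x _; exact Finset.mem_range.mpr (ZMod.val_lt x)
  · intro a ha; exact ZMod.val_natCast_of_lt (Finset.mem_range.mp ha)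
  · intro x _; exact ZMod.natCast_rightInverse x
  · intro a _; rfl

lemma sum_filter_zmod {q : ℕ} [NeZero q] (f : ZMod q → ℂ) :
    ∑ a ∈ (Finset.range q).filter (fun a => Nat.gcd a q = 1), f (a : ZMod q)
      = ∑ x : ZMod q, if IsUnit x then f x else 0 := by
  rw [Finset.sum_filter]
  have hc : ∀ a ∈ Finset.range q,
      (if Nat.gcd a q = 1 then f (a : ZMod q) else 0)
        = (fun x : ZMod q => if IsUnit x then f x else 0) ((a : ZMod q)) := by
    intro a _
    simp only [ZMod.isUnit_iff_coprime, Nat.coprime_iff_gcd_eq_one]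
  rw [Finset.sum_congr rfl hc]
  exact sum_range_zmod (fun x => if IsUnit x then f x else 0)

lemma natModEq_intModEq {n a b : ℕ} (h : a ≡ b [MOD n]) : (a : ℤ) ≡ (b : ℤ) [ZMOD n] :=
  Int.natCast_modEq_iff.mpr h

lemma val_mul_natCast {q : ℕ} [NeZero q] (a : ℕ) (z : ZMod q) :
    ((((a : ZMod q) * z).val : ℤ)) ≡ (a : ℤ) * (z.val : ℤ) [ZMOD q] := by
  have h : ((a : ZMod q) * z).val ≡ a * z.val [MOD q] := by
    rw [ZMod.val_mul, ZMod.val_natCast]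
    calc (a % q * z.val) % q ≡ a % q * z.val [MOD q] := Nat.mod_modEq _ _
      _ ≡ a * z.val [MOD q] := Nat.ModEq.mul_right _ (Nat.mod_modEq a q)
  exact_mod_cast natModEq_intModEq h

lemma sum_unit_mul {q : ℕ} [NeZero q] (f : ZMod q → ℂ) (u : (ZMod q)ˣ) :
    (∑ z : ZMod q, if IsUnit z then f z else 0)
      = ∑ z : ZMod q, if IsUnit z then f ((u : ZMod q) * z) else 0 := by
  refine Fintype.sum_bijective (fun z : ZMod q => ((u⁻¹ : (ZMod q)ˣ) : ZMod q) * z)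
    (Units.mulLeft u⁻¹).bijective _ _ ?_
  intro z
  have hmul : (u : ZMod q) * ((u⁻¹ : (ZMod q)ˣ) * z) = z := by
    rw [← mul_assoc]
    simp
  by_cases h : IsUnit z
  · simp [h, (Units.isUnit_units_mul u⁻¹ z).mpr h, hmul]
  · simp [h, fun hc => h ((Units.isUnit_units_mul u⁻¹ z).mp hc)]

lemma sum_range_mul_decomp {r t : ℕ} (hr : 0 < r) (f : ℕ → ℂ) :
    ∑ a ∈ range (r * t), f a = ∑ u ∈ range r, ∑ s ∈ range t, f (u + r * s) := by
  rw [← Finset.sum_product']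
  refine Finset.sum_nbij' (fun a => (a % r, a / r)) (fun p => p.1 + r * p.2) ?_ ?_ ?_ ?_ ?_
  · intro a ha
    rw [Finset.mem_range] at ha
    refine Finset.mem_product.mpr ⟨Finset.mem_range.mpr (Nat.mod_lt a hr), Finset.mem_range.mpr ?_⟩
    exact Nat.div_lt_of_lt_mul ha
  · intro p hp
    rw [Finset.mem_product, Finset.mem_range, Finset.mem_range] at hp
    refine Finset.mem_range.mpr ?_
    calc p.1 + r * p.2 < r + r * p.2 := by omega
      _ = r * (p.2 + 1) := by ring
      _ ≤ r * t := Nat.mul_le_mul_left r (by omega)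
  · intro a _
    exact Nat.mod_add_div a r
  · intro p hp
    rw [Finset.mem_product, Finset.mem_range, Finset.mem_range] at hp
    have h1 : (p.1 + r * p.2) % r = p.1 := by
      rw [Nat.add_mul_mod_self_left, Nat.mod_eq_of_lt hp.1]
    have h2 : (p.1 + r * p.2) / r = p.2 := by
      rw [Nat.add_mul_div_left _ _ hr, Nat.div_eq_of_lt hp.1, Nat.zero_add]
    exact Prod.ext h1 h2
  · intro a _
    exact (congrArg f (Nat.mod_add_div a r)).symm

lemma gaussS_eq {q : ℕ} [NeZero q] (χ : DirichletCharacter ℂ q) (n : ℤ) :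
    gaussS q χ ((n : ZMod q)) = ∑ x : ZMod q, χ x * EE q (x.val * n) := by
  rw [gaussS, sum_range_zmod (f := fun x : ZMod q => χ x * eZMod q (x * (n : ZMod q)))]
  exact Finset.sum_congr rfl fun x _ => by rw [eZMod_mul]

lemma ramanujanS_eq {q : ℕ} [NeZero q] (n : ℤ) :
    ramanujanS q ((n : ZMod q)) = ∑ x : ZMod q, if IsUnit x then EE q (x.val * n) else 0 := by
  rw [ramanujanS, sum_filter_zmod (f := fun x : ZMod q => eZMod q (x * (n : ZMod q)))]
  exact Finset.sum_congr rfl fun x _ => by by_cases h : IsUnit x <;> simp [h, eZMod_mul]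

set_option maxHeartbeats 1000000 in
lemma key (r t b2 : ℕ) (hr : 0 < r) (ht : 0 < t) (hb2 : 0 < b2)
    (χ : DirichletCharacter ℂ r)
    (hco : Nat.Coprime (r * t) b2)
    (hunit : ∀ a : ℕ, Nat.Coprime a r → Nat.Coprime a (r * t))
    (hrb : r ∣ r * t * b2) (n : ℤ) :
    gaussS (r * t * b2) (DirichletCharacter.changeLevel hrb χ) ((n : ZMod (r * t * b2))) =
      if (t : ℤ) ∣ n then
        χ ((b2 : ZMod r)) * ramanujanS b2 ((n : ZMod b2)) * (t : ℂ)
          * gaussS r χ (((n / t : ℤ) : ZMod r))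
      else 0 := by
  haveI : NeZero r := ⟨hr.ne'⟩
  haveI : NeZero t := ⟨ht.ne'⟩
  haveI : NeZero b2 := ⟨hb2.ne'⟩
  haveI : NeZero (r * t) := ⟨Nat.mul_ne_zero hr.ne' ht.ne'⟩
  haveI : NeZero (r * t * b2) := ⟨Nat.mul_ne_zero (Nat.mul_ne_zero hr.ne' ht.ne') hb2.ne'⟩
  have hr1pos : 0 < r * t := Nat.mul_pos hr ht
  have hrdvd : r ∣ r * t := Dvd.intro t rfl
  have hcoZ : IsCoprime ((r * t : ℕ) : ℤ) ((b2 : ℕ) : ℤ) := Nat.isCoprime_iff_coprime.mpr hco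
  obtain ⟨d, c, hbez0⟩ := hcoZ
  have hbez : c * b2 + d * (r * t) = 1 := by push_cast at hbez0 ⊢; linarith
  set χ1 := DirichletCharacter.changeLevel hrb χ with hχ1
  set χ2 := DirichletCharacter.changeLevel hrdvd χ with hχ2
  set F1 : ZMod (r * t) → ℂ := fun y => χ2 y * EE (r * t) (c * (y.val * n)) with hF1
  set F2 : ZMod b2 → ℂ :=
    fun z => (if IsUnit z then 1 else 0) * EE b2 (d * (z.val * n)) with hF2
  -- pointwise factorization
  have hfact : ∀ x : ZMod (r * t * b2),
      χ1 x * EE (r * t * b2) (x.val * n)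
        = F1 ((x.val : ZMod (r * t))) * F2 ((x.val : ZMod b2)) := by
    intro x
    have hx : ((x.val : ℕ) : ZMod (r * t * b2)) = x := ZMod.natCast_rightInverse x
    have hEE : EE (r * t * b2) (x.val * n)
        = EE (r * t) (c * (((x.val : ZMod (r * t))).val * n))
          * EE b2 (d * (((x.val : ZMod b2)).val * n)) := by
      rw [EE_split hr1pos.ne' hb2.ne' hbez ((x.val : ℤ) * n)]
      congr 1
      · refine EE_congr hr1pos.ne' (Int.ModEq.mul_left c (Int.ModEq.mul_right n ?_))
        rw [ZMod.val_natCast]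
        exact natModEq_intModEq (Nat.mod_modEq _ _) |>.symm
      · refine EE_congr hb2.ne' (Int.ModEq.mul_left d (Int.ModEq.mul_right n ?_))
        rw [ZMod.val_natCast]
        exact natModEq_intModEq (Nat.mod_modEq _ _) |>.symm
    have hchar : χ1 x = χ2 ((x.val : ZMod (r * t))) * (if IsUnit ((x.val : ZMod b2)) then 1 else 0) := by
      by_cases hu : Nat.Coprime x.val (r * t * b2)
      · have hsplit := Nat.coprime_mul_iff_right.mp ((Nat.coprime_mul_iff_right (k := x.val)).mp hu).1
        have hcop1 : Nat.Coprime x.val (r * t) := (Nat.coprime_mul_iff_right.mp hu).1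
        have hcop2 : Nat.Coprime x.val b2 := (Nat.coprime_mul_iff_right.mp hu).2
        have hux : IsUnit x := by
          rw [← hx]; exact (ZMod.isUnit_iff_coprime _ _).mpr hu
        have huy : IsUnit ((x.val : ZMod (r * t))) := (ZMod.isUnit_iff_coprime _ _).mpr hcop1
        have huz : IsUnit ((x.val : ZMod b2)) := (ZMod.isUnit_iff_coprime _ _).mpr hcop2
        have hv1 : χ1 x = χ ((ZMod.cast x : ZMod r)) := by
          rw [hχ1, ← hux.unit_spec, DirichletCharacter.changeLevel_eq_cast_of_dvd χ hrb hux.unit]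
        have hv2 : χ2 ((x.val : ZMod (r * t))) = χ ((ZMod.cast ((x.val : ZMod (r * t))) : ZMod r)) := by
          rw [hχ2, ← huy.unit_spec, DirichletCharacter.changeLevel_eq_cast_of_dvd χ hrdvd huy.unit]
        have hc1 : (ZMod.cast x : ZMod r) = ((x.val : ℕ) : ZMod r) := by
          conv_lhs => rw [← hx]
          rw [ZMod.cast_natCast hrb]
        have hc2 : (ZMod.cast ((x.val : ZMod (r * t))) : ZMod r) = ((x.val : ℕ) : ZMod r) :=
          ZMod.cast_natCast hrdvd _
        rw [if_pos huz, mul_one, hv1, hv2, hc1, hc2]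
      · have hnux : ¬ IsUnit x := by
          rw [← hx]
          exact fun h => hu ((ZMod.isUnit_iff_coprime _ _).mp h)
        rw [MulChar.map_nonunit χ1 hnux]
        by_cases h1 : Nat.Coprime x.val (r * t)
        · have h2 : ¬ Nat.Coprime x.val b2 := fun h2 =>
            hu (Nat.coprime_mul_iff_right.mpr ⟨h1, h2⟩)
          have : ¬ IsUnit ((x.val : ZMod b2)) := fun h => h2 ((ZMod.isUnit_iff_coprime _ _).mp h)
          rw [if_neg this, mul_zero]
        · have : ¬ IsUnit ((x.val : ZMod (r * t))) := fun h => h1 ((ZMod.isUnit_iff_coprime _ _).mp h)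
          rw [MulChar.map_nonunit χ2 this, zero_mul]
    rw [hEE, hchar, hF1, hF2]
    ring
  -- CRT split of the sum
  have hsum : (∑ x : ZMod (r * t * b2), χ1 x * EE (r * t * b2) (x.val * n))
      = (∑ y : ZMod (r * t), F1 y) * (∑ z : ZMod b2, F2 z) := by
    let e := ZMod.chineseRemainder hco
    have he : ∀ x : ZMod (r * t * b2), e x = ((x.val : ZMod (r * t)), (x.val : ZMod b2)) := by
      intro x
      have h1 : e x = ZMod.cast x := rfl
      rw [h1]
      have h2 : (ZMod.cast x : ZMod (r * t) × ZMod b2) = ((x.val : ℕ) : ZMod (r * t) × ZMod b2) :=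
        (ZMod.natCast_val x).symm
      rw [h2]
      exact Prod.ext (by simp) (by simp)
    calc (∑ x : ZMod (r * t * b2), χ1 x * EE (r * t * b2) (x.val * n))
        = ∑ p : ZMod (r * t) × ZMod b2, F1 p.1 * F2 p.2 := by
          refine Fintype.sum_bijective e e.toEquiv.bijective _ _ ?_
          intro x
          rw [hfact x, he x]
      _ = (∑ y : ZMod (r * t), F1 y) * (∑ z : ZMod b2, F2 z) := by
          rw [Finset.sum_mul_sum]
          exact Fintype.sum_prod_type (fun p : ZMod (r * t) × ZMod b2 => F1 p.1 * F2 p.2)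
  -- S2
  have hS2 : (∑ z : ZMod b2, F2 z) = ramanujanS b2 ((n : ZMod b2)) := by
    have hstep : ∀ z : ZMod b2, F2 z
        = (fun z : ZMod b2 => if IsUnit z then EE b2 (d * ((z.val : ℤ) * n)) else 0) z := by
      intro z
      simp only [hF2]
      by_cases h : IsUnit z <;> simp [h]
    rw [Finset.sum_congr rfl fun z _ => hstep z, ramanujanS_eq]
    have hw : Nat.Coprime (r * t) b2 := hco
    have h1 := sum_unit_mul (f := fun z : ZMod b2 => EE b2 (d * ((z.val : ℤ) * n)))
      (ZMod.unitOfCoprime _ hw)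
    refine h1.trans (Finset.sum_congr rfl fun z _ => ?_)
    by_cases h : IsUnit z
    · rw [if_pos h, if_pos h]
      have hcoe : ((ZMod.unitOfCoprime _ hw : (ZMod b2)ˣ) : ZMod b2) = ((r * t : ℕ) : ZMod b2) :=
        ZMod.coe_unitOfCoprime _ _
      simp only [hcoe]
      refine EE_congr hb2.ne' ?_
      have hv := val_mul_natCast (q := b2) (r * t) z
      calc d * ((((((r * t : ℕ) : ZMod b2) * z).val : ℤ)) * n)
          ≡ d * ((((r * t : ℕ) : ℤ) * z.val) * n) [ZMOD b2] :=
            Int.ModEq.mul_left d (hv.mul_right n)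
        _ = (z.val : ℤ) * n - (c * ((z.val : ℤ) * n)) * b2 := by
            push_cast
            linear_combination ((z.val : ℤ) * n) * hbez
        _ ≡ (z.val : ℤ) * n [ZMOD b2] :=
            Int.modEq_iff_dvd.mpr ⟨c * ((z.val : ℤ) * n), by ring⟩
    · rw [if_neg h, if_neg h]
  -- S1
  have hS1 : (∑ y : ZMod (r * t), F1 y)
      = if (t : ℤ) ∣ n then
          χ ((b2 : ZMod r)) * (t : ℂ) * gaussS r χ (((n / t : ℤ) : ZMod r))
        else 0 := by
    rw [← sum_range_zmod (f := F1),
      sum_range_mul_decomp hr (fun a : ℕ => F1 ((a : ZMod (r * t))))]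
    have hterm : ∀ u ∈ Finset.range r, ∀ s ∈ Finset.range t,
        F1 (((u + r * s : ℕ)) : ZMod (r * t))
          = (χ ((u : ZMod r)) * EE (r * t) (c * ((u : ℤ) * n))) * EE t ((c * n) * s) := by
      intro u hu s hs
      rw [Finset.mem_range] at hu hs
      have hlt : u + r * s < r * t := by
        calc u + r * s < r + r * s := by omega
          _ = r * (s + 1) := by ring
          _ ≤ r * t := Nat.mul_le_mul_left r (by omega)
      have hval : (((u + r * s : ℕ)) : ZMod (r * t)).val = u + r * s :=
        ZMod.val_natCast_of_lt hlt
      have hcharval : χ2 (((u + r * s : ℕ)) : ZMod (r * t)) = χ ((u : ZMod r)) := by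
        by_cases hcu : Nat.Coprime u r
        · have hcu2 : Nat.Coprime (u + r * s) r := (Nat.coprime_add_mul_left_left u r s).mpr hcu
          have hcu3 : Nat.Coprime (u + r * s) (r * t) := hunit _ hcu2
          have huy : IsUnit (((u + r * s : ℕ)) : ZMod (r * t)) :=
            (ZMod.isUnit_iff_coprime _ _).mpr hcu3
          rw [hχ2, ← huy.unit_spec,
            DirichletCharacter.changeLevel_eq_cast_of_dvd χ hrdvd huy.unit]
          congr 1
          rw [huy.unit_spec, ZMod.cast_natCast hrdvd]
          push_cast
          simp
        · have h1 : ¬ Nat.Coprime (u + r * s) (r * t) := by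
            intro h
            have h2 : Nat.Coprime (u + r * s) r := Nat.Coprime.coprime_dvd_right hrdvd h
            exact hcu ((Nat.coprime_add_mul_left_left u r s).mp h2)
          have h2 : ¬ IsUnit (((u + r * s : ℕ)) : ZMod (r * t)) :=
            fun h => h1 ((ZMod.isUnit_iff_coprime _ _).mp h)
          have h3 : ¬ IsUnit ((u : ZMod r)) :=
            fun h => hcu ((ZMod.isUnit_iff_coprime _ _).mp h)
          rw [hχ2] at *
          rw [MulChar.map_nonunit _ h2, MulChar.map_nonunit χ h3]
      simp only [hF1]
      rw [hval, hcharval]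
      have harg : (c * (((u + r * s : ℕ) : ℤ) * n)) = c * ((u : ℤ) * n) + (r : ℕ) * ((c * n) * s) := by
        push_cast
        ring
      rw [harg, EE_add, EE_mul_left t hr.ne']
      ring
    rw [Finset.sum_congr rfl fun u hu => Finset.sum_congr rfl fun s hs => hterm u hu s hs]
    have hinner : ∀ u ∈ Finset.range r,
        ∑ s ∈ Finset.range t, (χ ((u : ZMod r)) * EE (r * t) (c * ((u : ℤ) * n))) * EE t ((c * n) * s)
          = (χ ((u : ZMod r)) * EE (r * t) (c * ((u : ℤ) * n))) * (if (t : ℤ) ∣ c * n then (t : ℂ) else 0) := by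
      intro u _
      rw [← Finset.mul_sum, EE_geom ht (c * n)]
    rw [Finset.sum_congr rfl hinner]
    have hiff : ((t : ℤ) ∣ c * n) ↔ ((t : ℤ) ∣ n) := by
      constructor
      · intro h
        have hcop : IsCoprime ((t : ℕ) : ℤ) c := ⟨d * r, (b2 : ℤ), by push_cast; linear_combination hbez⟩
        exact hcop.dvd_of_dvd_mul_left h
      · exact fun h => Dvd.dvd.mul_left h c
    by_cases hd : (t : ℤ) ∣ n
    · rw [if_pos hd]
      have hif : (if (t : ℤ) ∣ c * n then (t : ℂ) else 0) = (t : ℂ) := if_pos (hiff.mpr hd)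
      simp only [hif]
      have hnt : n = t * (n / t) := (Int.mul_ediv_cancel' hd).symm
      have hEu : ∀ u ∈ Finset.range r,
          χ ((u : ZMod r)) * EE (r * t) (c * ((u : ℤ) * n)) * (t : ℂ)
            = (χ ((u : ZMod r)) * EE r (c * ((u : ℤ) * (n / t)))) * (t : ℂ) := by
        intro u _
        have hnt' : (t : ℤ) * (n / t) = n := Int.mul_ediv_cancel' hd
        have h3 : c * ((u : ℤ) * n) = (t : ℕ) * (c * ((u : ℤ) * (n / t))) := by
          push_cast
          linear_combination (-(c * (u : ℤ))) * hnt'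
        rw [h3, show r * t = t * r from mul_comm r t, EE_mul_left r ht.ne']
      rw [Finset.sum_congr rfl hEu, ← Finset.sum_mul]
      have hmain : (∑ u ∈ Finset.range r, χ ((u : ZMod r)) * EE r (c * ((u : ℤ) * (n / t))))
          = χ ((b2 : ZMod r)) * gaussS r χ (((n / t : ℤ) : ZMod r)) := by
        have hstep1 : ∀ u ∈ Finset.range r, χ ((u : ZMod r)) * EE r (c * ((u : ℤ) * (n / t)))
            = (fun x : ZMod r => if IsUnit x then χ x * EE r (c * ((x.val : ℤ) * (n / t))) else 0)
                ((u : ZMod r)) := by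
          intro u hu
          rw [Finset.mem_range] at hu
          simp only
          rw [ZMod.val_natCast_of_lt hu]
          by_cases h : IsUnit ((u : ZMod r))
          · rw [if_pos h]
          · rw [if_neg h, MulChar.map_nonunit χ h, zero_mul]
        rw [Finset.sum_congr rfl hstep1,
          sum_range_zmod (f := fun x : ZMod r => if IsUnit x then χ x * EE r (c * ((x.val : ℤ) * (n / t))) else 0)]
        have hcopb2r : Nat.Coprime b2 r := (Nat.Coprime.coprime_dvd_left hrdvd hco).symm
        have h2 := sum_unit_mul (f := fun x : ZMod r => χ x * EE r (c * ((x.val : ℤ) * (n / t))))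
          (ZMod.unitOfCoprime _ hcopb2r)
        refine h2.trans ?_
        have hcoe : ((ZMod.unitOfCoprime _ hcopb2r : (ZMod r)ˣ) : ZMod r) = ((b2 : ℕ) : ZMod r) :=
          ZMod.coe_unitOfCoprime _ _
        have hptwise : ∀ x : ZMod r,
            (if IsUnit x then
              χ (((ZMod.unitOfCoprime _ hcopb2r : (ZMod r)ˣ) : ZMod r) * x)
                * EE r (c * ((((((ZMod.unitOfCoprime _ hcopb2r : (ZMod r)ˣ) : ZMod r)) * x).val : ℤ) * (n / t)))
            else 0)
              = χ ((b2 : ZMod r)) * (if IsUnit x then χ x * EE r ((x.val : ℤ) * (n / t)) else 0) := by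
          intro x
          by_cases h : IsUnit x
          · rw [if_pos h, if_pos h]
            rw [hcoe, map_mul]
            have hEEeq : EE r (c * (((((b2 : ℕ) : ZMod r) * x).val : ℤ) * (n / t)))
                = EE r ((x.val : ℤ) * (n / t)) := by
              refine EE_congr hr.ne' ?_
              have h1 := val_mul_natCast (q := r) b2 x
              calc c * (((((b2 : ℕ) : ZMod r) * x).val : ℤ) * (n / t))
                  ≡ c * (((b2 : ℤ) * (x.val : ℤ)) * (n / t)) [ZMOD r] :=
                    Int.ModEq.mul_left c (h1.mul_right (n / t))
                _ = (x.val : ℤ) * (n / t) - (d * t * ((x.val : ℤ) * (n / t))) * r := by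
                    push_cast
                    linear_combination ((x.val : ℤ) * (n / t)) * hbez
                _ ≡ (x.val : ℤ) * (n / t) [ZMOD r] :=
                    Int.modEq_iff_dvd.mpr ⟨d * t * ((x.val : ℤ) * (n / t)), by ring⟩
            rw [hEEeq]
            ring
          · rw [if_neg h, if_neg h, mul_zero]
        refine (Finset.sum_congr rfl fun x _ => hptwise x).trans ?_
        rw [← Finset.mul_sum]
        congr 1
        rw [gaussS_eq]
        refine Finset.sum_congr rfl fun x _ => ?_
        by_cases h : IsUnit x
        · rw [if_pos h]
        · rw [if_neg h, MulChar.map_nonunit χ h, zero_mul]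
      rw [hmain]
      ring
    · rw [if_neg hd]
      have hif : (if (t : ℤ) ∣ c * n then (t : ℂ) else 0) = 0 := if_neg (fun h => hd (hiff.mp h))
      simp only [hif, mul_zero, Finset.sum_const_zero]
  -- conclude
  rw [gaussS_eq χ1 n, hsum, hS1, hS2]
  by_cases hd : (t : ℤ) ∣ n
  · rw [if_pos hd, if_pos hd]
    ring
  · rw [if_neg hd, if_neg hd, zero_mul]

/-- Let `r ∣ b` be positive integers and let `r1 = (b, r^∞)` be the largest
divisor of `b` all of whose prime factors divide `r` (characterized by
`r1 = gcd(b, r^n)` for all sufficiently large `n`). Let `χ1` be the character mod `b`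
induced by `χ` mod `r`. Then `G_{χ1}(m²) = χ(b/r1) R(m², b/r1) (r1/r) G_χ(m²r/r1)`
if `r1 ∣ m²r`, and `G_{χ1}(m²) = 0` otherwise. -/
theorem stmt5 (r b : ℕ) (hr : 0 < r) (hb : 0 < b) (hrb : r ∣ b)
    (r1 : ℕ) (hr1 : ∃ M : ℕ, ∀ n : ℕ, M ≤ n → r1 = Nat.gcd b (r ^ n))
    (χ : DirichletCharacter ℂ r) (m : ℤ) :
    if (r1 : ℤ) ∣ m ^ 2 * (r : ℤ) then
      gaussS b (DirichletCharacter.changeLevel hrb χ) ((m ^ 2 : ℤ) : ZMod b) =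
        χ (((b / r1 : ℕ)) : ZMod r) * ramanujanS (b / r1) ((m ^ 2 : ℤ) : ZMod (b / r1)) *
          (((r1 / r : ℕ)) : ℂ) * gaussS r χ ((m ^ 2 * (r : ℤ) / (r1 : ℤ) : ℤ) : ZMod r)
    else gaussS b (DirichletCharacter.changeLevel hrb χ) ((m ^ 2 : ℤ) : ZMod b) = 0 := by
  obtain ⟨M, hM⟩ := hr1
  set M' := max M 1 with hM'def
  have hgcd : r1 = Nat.gcd b (r ^ M') := hM M' (le_max_left _ _)
  have hgcd1 : r1 = Nat.gcd b (r ^ (M' + 1)) := hM _ (le_trans (le_max_left _ _) (Nat.le_succ _))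
  have hr1b : r1 ∣ b := hgcd ▸ Nat.gcd_dvd_left _ _
  have hr1rM : r1 ∣ r ^ M' := hgcd ▸ Nat.gcd_dvd_right _ _
  have hM1 : 1 ≤ M' := le_max_right _ _
  have hrr1 : r ∣ r1 := by
    rw [hgcd]
    exact Nat.dvd_gcd hrb (dvd_pow_self r (by omega))
  have hr1pos : 0 < r1 := by
    rw [hgcd]
    exact Nat.gcd_pos_of_pos_left _ hb
  have hcop_r : Nat.Coprime r (b / r1) := by
    set g := Nat.gcd r (b / r1) with hg
    have hg1 : r1 * g ∣ b := by
      obtain ⟨k, hk⟩ := (Nat.gcd_dvd_right r (b / r1) : g ∣ b / r1)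
      have hbk : b = r1 * (b / r1) := (Nat.mul_div_cancel' hr1b).symm
      exact ⟨k, by rw [hbk, hk, mul_assoc]⟩
    have hg2 : r1 * g ∣ r ^ (M' + 1) := by
      rw [pow_succ]
      exact mul_dvd_mul hr1rM (Nat.gcd_dvd_left _ _)
    have hg3 : r1 * g ∣ r1 := by
      nth_rewrite 2 [hgcd1]
      exact Nat.dvd_gcd hg1 hg2
    have hgpos : 0 < g := Nat.gcd_pos_of_pos_left _ hr
    have hle : r1 * g ≤ r1 * 1 := by
      rw [mul_one]
      exact Nat.le_of_dvd hr1pos hg3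
    have : g ≤ 1 := Nat.le_of_mul_le_mul_left hle hr1pos
    have : g = 1 := by omega
    exact this
  have hunit : ∀ a : ℕ, Nat.Coprime a r → Nat.Coprime a r1 := fun a h =>
    Nat.Coprime.coprime_dvd_right hr1rM (h.pow_right M')
  have hcop1 : Nat.Coprime r1 (b / r1) :=
    Nat.Coprime.coprime_dvd_left hr1rM (hcop_r.pow_left M')
  obtain ⟨t, ht⟩ := hrr1
  have htpos : 0 < t := by
    rcases Nat.eq_zero_or_pos t with rfl | h
    · rw [ht, mul_zero] at hr1pos
      exact absurd hr1pos (lt_irrefl 0)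
    · exact h
  obtain ⟨b2, hb2⟩ := hr1b
  have hb2pos : 0 < b2 := by
    rcases Nat.eq_zero_or_pos b2 with rfl | h
    · rw [hb2, mul_zero] at hb
      exact absurd hb (lt_irrefl 0)
    · exact h
  subst ht
  subst hb2
  have e1 : r * t * b2 / (r * t) = b2 := Nat.mul_div_cancel_left b2 (Nat.mul_pos hr htpos)
  have e2 : r * t / r = t := Nat.mul_div_cancel_left t hr
  rw [e1] at hcop1
  rw [e1, e2]
  have hcond : ((r * t : ℕ) : ℤ) ∣ m ^ 2 * (r : ℤ) ↔ (t : ℤ) ∣ m ^ 2 := by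
    constructor
    · intro h
      obtain ⟨k, hk⟩ := h
      refine ⟨k, ?_⟩
      have hr0 : (r : ℤ) ≠ 0 := Int.natCast_ne_zero.mpr hr.ne'
      apply mul_right_cancel₀ hr0
      push_cast at hk
      linarith [hk]
    · intro ⟨k, hk⟩
      exact ⟨k, by push_cast; rw [hk]; ring⟩
  have hdiv : (m ^ 2 * (r : ℤ)) / ((r * t : ℕ) : ℤ) = m ^ 2 / (t : ℤ) := by
    push_cast
    rw [mul_comm (m ^ 2) ((r : ℕ) : ℤ)]
    exact Int.mul_ediv_mul_of_pos _ _ (by exact_mod_cast hr)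
  have hk := key r t b2 hr htpos hb2pos χ hcop1 hunit hrb (m ^ 2)
  by_cases hd : (t : ℤ) ∣ m ^ 2
  · rw [if_pos (hcond.mpr hd)]
    rw [hk, if_pos hd, hdiv]
  · rw [if_neg (fun h => hd (hcond.mp h))]
    rw [hk, if_neg hd]
end

section
/- Let r and r1 be positive integers with r | r1, let χ be a Dirichlet character modulo r, and let m be an integer. Then Σ_{u mod r1} χ(u mod r) · e(um/r1) = (r1/r) · G_χ(mr/r1) if r1 | mr, and the sum equals 0 otherwise. -/
lemma eZMod_intCast' (q : ℕ) [NeZero q] (z : ℤ) :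
    Complex.exp (2 * Real.pi * Complex.I * (((z : ZMod q)).val : ℂ) / (q : ℂ)) =
      Complex.exp (2 * Real.pi * Complex.I * (z : ℂ) / (q : ℂ)) := by
  have hq : (q : ℂ) ≠ 0 := Nat.cast_ne_zero.mpr (NeZero.ne q)
  obtain ⟨n, hn⟩ : (q : ℤ) ∣ z - ((z : ZMod q).val : ℤ) := by
    rw [← ZMod.intCast_zmod_eq_zero_iff_dvd]
    push_cast
    simp [ZMod.natCast_val, ZMod.intCast_cast, ZMod.cast_id]
  have hval : (((z : ZMod q).val : ℂ)) = (z : ℂ) - (q : ℂ) * (n : ℂ) := by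
    have h : (((z : ZMod q).val : ℤ)) = z - (q : ℤ) * n := by linarith
    exact_mod_cast congrArg (Int.cast : ℤ → ℂ) h
  rw [hval, Complex.exp_eq_exp_iff_exists_int]
  exact ⟨-n, by push_cast; field_simp; ring⟩

lemma sum_range_mul' {M : Type*} [AddCommMonoid M] (r k : ℕ) (f : ℕ → M) :
    ∑ u ∈ Finset.range (r * k), f u =
      ∑ p ∈ Finset.range r ×ˢ Finset.range k, f (p.1 + r * p.2) := by
  rcases Nat.eq_zero_or_pos r with h | h
  · subst h; simp
  refine Finset.sum_nbij' (fun u => (u % r, u / r)) (fun p => p.1 + r * p.2) ?_ ?_ ?_ ?_ ?_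
  · intro u hu
    simp only [Finset.mem_range] at hu
    simp only [Finset.mem_product, Finset.mem_range]
    exact ⟨Nat.mod_lt _ h, Nat.div_lt_of_lt_mul (mul_comm r k ▸ hu)⟩
  · intro p hp
    simp only [Finset.mem_product, Finset.mem_range] at hp
    simp only [Finset.mem_range]
    calc p.1 + r * p.2 < r + r * p.2 := by omega
    _ ≤ r * k := by nlinarith [hp.1, hp.2]
  · intro u hu; simp [Nat.mod_add_div]
  · intro p hp
    simp only [Finset.mem_product, Finset.mem_range] at hp
    simp [Nat.add_mul_div_left _ _ h, Nat.div_eq_of_lt hp.1, Nat.mod_eq_of_lt hp.1]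
  · intro u hu; rw [Nat.mod_add_div]

lemma eZMod_int (q : ℕ) [NeZero q] (z : ℤ) :
    eZMod q ((z : ZMod q)) = Complex.exp (2 * Real.pi * Complex.I * (z : ℂ) / (q : ℂ)) :=
  eZMod_intCast' q z

/-- For positive integers `r ∣ r1`, a Dirichlet character `χ` mod `r`
and an integer `m`: `Σ_{u mod r1} χ(u mod r) e(um/r1) = (r1/r)·G_χ(mr/r1)` if `r1 ∣ mr`,
and the sum is `0` otherwise. -/
theorem stmt6 (r r1 : ℕ) (hr : 0 < r) (hr1 : 0 < r1) (hdvd : r ∣ r1)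
    (χ : DirichletCharacter ℂ r) (m : ℤ) :
    ∑ u ∈ Finset.range r1, χ ((u : ℕ) : ZMod r) * eZMod r1 (((u : ℕ) : ZMod r1) * (m : ZMod r1)) =
      if (r1 : ℤ) ∣ m * (r : ℤ) then
        (((r1 / r : ℕ)) : ℂ) * gaussS r χ ((m * (r : ℤ) / (r1 : ℤ) : ℤ) : ZMod r)
      else 0 := by
  haveI : NeZero r := ⟨hr.ne'⟩
  haveI : NeZero r1 := ⟨hr1.ne'⟩
  have hC1 : (r1 : ℂ) ≠ 0 := Nat.cast_ne_zero.mpr hr1.ne'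
  have hC : (r : ℂ) ≠ 0 := Nat.cast_ne_zero.mpr hr.ne'
  set k := r1 / r with hk
  have hrk : r * k = r1 := Nat.mul_div_cancel' hdvd
  -- rewrite each term of the LHS
  have hterm : ∀ u : ℕ,
      χ ((u : ℕ) : ZMod r) * eZMod r1 (((u : ℕ) : ZMod r1) * (m : ZMod r1)) =
        χ (u : ZMod r) * Complex.exp (2 * Real.pi * Complex.I * ((u : ℂ) * (m : ℂ)) / (r1 : ℂ)) := by
    intro u
    have h1 : ((u : ℕ) : ZMod r1) * (m : ZMod r1) = (((u : ℤ) * m : ℤ) : ZMod r1) := by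
      push_cast; ring
    rw [h1, eZMod_int r1]
    push_cast
    ring_nf
  simp only [hterm]
  set z : ℂ := Complex.exp (2 * Real.pi * Complex.I * ((r : ℂ) * (m : ℂ)) / (r1 : ℂ)) with hz
  have key : ∑ u ∈ Finset.range r1,
      χ (u : ZMod r) * Complex.exp (2 * Real.pi * Complex.I * ((u : ℂ) * (m : ℂ)) / (r1 : ℂ)) =
      (∑ a ∈ Finset.range r,
        χ (a : ZMod r) * Complex.exp (2 * Real.pi * Complex.I * ((a : ℂ) * (m : ℂ)) / (r1 : ℂ))) *
      (∑ t ∈ Finset.range k, z ^ t) := by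
    rw [← hrk, sum_range_mul', Finset.sum_mul_sum, Finset.sum_product]
    simp only [hrk]
    refine Finset.sum_congr rfl fun a _ => Finset.sum_congr rfl fun t _ => ?_
    have hcast : (((a + r * t : ℕ)) : ZMod r) = (a : ZMod r) := by push_cast; simp
    rw [hcast, hz, ← Complex.exp_nat_mul, mul_assoc (χ ((a : ℕ) : ZMod r)), ← Complex.exp_add]
    congr 2
    push_cast
    field_simp
  rw [key]
  by_cases hdv : (r1 : ℤ) ∣ m * (r : ℤ)
  · rw [if_pos hdv]
    obtain ⟨n, hn⟩ := hdv
    have hnC : (m : ℂ) * (r : ℂ) = (r1 : ℂ) * (n : ℂ) := by exact_mod_cast congrArg (Int.cast : ℤ → ℂ) hn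
    have hz1 : z = 1 := by
      rw [hz, Complex.exp_eq_one_iff]
      refine ⟨n, ?_⟩
      rw [div_eq_iff hC1]
      linear_combination (2 * (Real.pi : ℂ) * Complex.I) * hnC
    have hgeo : ∑ t ∈ Finset.range k, z ^ t = (k : ℂ) := by
      simp [hz1]
    rw [hgeo]
    set n' : ℤ := m * (r : ℤ) / (r1 : ℤ) with hn'
    have hn'eq : n' * (r1 : ℤ) = m * (r : ℤ) := Int.ediv_mul_cancel ⟨n, hn⟩
    have hgauss : ∑ a ∈ Finset.range r,
        χ (a : ZMod r) * Complex.exp (2 * Real.pi * Complex.I * ((a : ℂ) * (m : ℂ)) / (r1 : ℂ)) =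
        gaussS r χ ((n' : ℤ) : ZMod r) := by
      unfold gaussS
      refine Finset.sum_congr rfl fun a _ => ?_
      congr 1
      have h2 : ((a : ℕ) : ZMod r) * ((n' : ℤ) : ZMod r) = (((a : ℤ) * n' : ℤ) : ZMod r) := by
        push_cast; ring
      rw [h2, eZMod_int r]
      congr 1
      have hn'C : (n' : ℂ) * (r1 : ℂ) = (m : ℂ) * (r : ℂ) := by
        exact_mod_cast congrArg (Int.cast : ℤ → ℂ) hn'eq
      push_cast
      rw [div_eq_div_iff hC1 hC]
      linear_combination (-(2 * (Real.pi : ℂ) * Complex.I * (a : ℂ))) * hn'C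
    rw [hgauss]
    ring
  · rw [if_neg hdv]
    have hzne : z ≠ 1 := by
      intro hcon
      rw [hz, Complex.exp_eq_one_iff] at hcon
      obtain ⟨n, hn⟩ := hcon
      apply hdv
      refine ⟨n, ?_⟩
      have h2pi : (2 * (Real.pi : ℂ) * Complex.I) ≠ 0 := by
        simp [Real.pi_ne_zero, Complex.I_ne_zero]
      rw [div_eq_iff hC1] at hn
      have hc : (m : ℂ) * (r : ℂ) = (r1 : ℂ) * (n : ℂ) := by
        apply mul_left_cancel₀ h2pi
        linear_combination hn
      exact_mod_cast hc
    have hzk : z ^ k = 1 := by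
      rw [hz, ← Complex.exp_nat_mul, Complex.exp_eq_one_iff]
      refine ⟨m, ?_⟩
      have hkr : (r : ℂ) * (k : ℂ) = (r1 : ℂ) := by exact_mod_cast congrArg (Nat.cast : ℕ → ℂ) hrk
      rw [mul_div_assoc', div_eq_iff hC1]
      linear_combination (2 * (Real.pi : ℂ) * Complex.I * (m : ℂ)) * hkr
    rw [geom_sum_eq hzne, hzk, sub_self, zero_div, mul_zero]
end

section
/- Define ψ(n1, n2, r) := Σ_{u mod r, gcd(u,r)=1} R(u + n1, r) · R(u + n2, r). Then for every prime p and all integers n1, n2, one has ψ(n1, n2, p) = p · R(n1 − n2, p) − R(n1, p) · R(n2, p). -/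
/-- `ψ(n1, n2, r) = Σ_{u mod r, (u,r)=1} R(u + n1, r) R(u + n2, r)`. -/
noncomputable def psiSum (n1 n2 : ℤ) (r : ℕ) : ℂ :=
  ∑ u ∈ (Finset.range r).filter (fun u => Nat.gcd u r = 1),
    ramanujanS r (((u : ℕ) : ZMod r) + (n1 : ZMod r)) *
      ramanujanS r (((u : ℕ) : ZMod r) + (n2 : ZMod r))

open Finset

lemma eZMod_pow (q : ℕ) (x : ZMod q) :
    eZMod q x = Complex.exp (2 * Real.pi * Complex.I / q) ^ x.val := by
  rw [← Complex.exp_nat_mul, eZMod]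
  congr 1
  ring

lemma sum_range_cast (q : ℕ) [NeZero q] (f : ZMod q → ℂ) :
    ∑ a ∈ Finset.range q, f (a : ZMod q) = ∑ x : ZMod q, f x := by
  refine Finset.sum_nbij' (fun a => (a : ZMod q)) (fun x => x.val) ?_ ?_ ?_ ?_ ?_
  · intro a _; exact mem_univ _
  · intro x _; exact mem_range.mpr (ZMod.val_lt x)
  · intro a ha; exact ZMod.val_cast_of_lt (mem_range.mp ha)
  · intro x _; exact ZMod.natCast_rightInverse x
  · intro a _; rfl

lemma sum_eZMod (q : ℕ) [NeZero q] (hq : 1 < q) : ∑ x : ZMod q, eZMod q x = 0 := by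
  rw [← sum_range_cast]
  have hζ := Complex.isPrimitiveRoot_exp q (by omega)
  rw [← hζ.geom_sum_eq_zero hq]
  refine Finset.sum_congr rfl fun a ha => ?_
  rw [eZMod_pow, ZMod.val_cast_of_lt (mem_range.mp ha)]

lemma sum_coprime (p : ℕ) [NeZero p] (hp : p.Prime) (f : ZMod p → ℂ) :
    ∑ a ∈ (Finset.range p).filter (fun a => Nat.gcd a p = 1), f (a : ZMod p)
      = (∑ x : ZMod p, f x) - f 0 := by
  have hfe : (Finset.range p).filter (fun a => Nat.gcd a p = 1)
      = (Finset.range p).erase 0 := by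
    ext a
    simp only [mem_filter, mem_erase, mem_range]
    constructor
    · rintro ⟨h1, h2⟩
      refine ⟨?_, h1⟩
      rintro rfl
      simp only [Nat.gcd_zero_left] at h2
      have := hp.two_le
      omega
    · rintro ⟨h1, h2⟩
      refine ⟨h2, ?_⟩
      have : ¬ p ∣ a := fun h => absurd (Nat.le_of_dvd (Nat.pos_of_ne_zero h1) h) (by omega)
      exact Nat.Coprime.symm (hp.coprime_iff_not_dvd.mpr this)
  rw [hfe, Finset.sum_erase_eq_sub (mem_range.mpr hp.pos)]
  rw [sum_range_cast p (fun x => f x)]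
  norm_num

set_option maxRecDepth 8000 in
lemma ram_prime (p : ℕ) (hp : p.Prime) (n : ZMod p) :
    ramanujanS p n = (if n = 0 then (p : ℂ) else 0) - 1 := by
  haveI : Fact p.Prime := ⟨hp⟩
  haveI : NeZero p := ⟨hp.pos.ne'⟩
  rw [ramanujanS, sum_coprime p hp (fun x => eZMod p (x * n))]
  have h0 : eZMod p ((0 : ZMod p) * n) = 1 := by
    simp [eZMod]
  rw [h0]
  congr 1
  by_cases hn : n = 0
  · subst hn
    simp [eZMod, Finset.card_univ, ZMod.card]
  · rw [if_neg hn, ← sum_eZMod p hp.one_lt]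
    exact Equiv.sum_comp (Equiv.mulRight₀ n hn) (eZMod p)

set_option maxRecDepth 8000 in
/-- For every prime `p` and integers `n1, n2`,
`ψ(n1, n2, p) = p·R(n1 − n2, p) − R(n1, p)·R(n2, p)`. -/
theorem stmt11 (p : ℕ) (hp : p.Prime) (n1 n2 : ℤ) :
    psiSum n1 n2 p =
      (p : ℂ) * ramanujanS p ((n1 - n2 : ℤ) : ZMod p) -
        ramanujanS p ((n1 : ℤ) : ZMod p) * ramanujanS p ((n2 : ℤ) : ZMod p) := by
  haveI : Fact p.Prime := ⟨hp⟩
  haveI : NeZero p := ⟨hp.pos.ne'⟩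
  set a : ZMod p := (n1 : ZMod p) with ha
  set b : ZMod p := (n2 : ZMod p) with hb
  have hab : ((n1 - n2 : ℤ) : ZMod p) = a - b := by push_cast; ring
  rw [psiSum, hab,
    sum_coprime p hp (fun x => ramanujanS p (x + a) * ramanujanS p (x + b))]
  simp only [ram_prime p hp]
  have key : ∀ c : ZMod p, ∀ x : ZMod p, (x + c = 0) = (x = -c) := by
    intro c x; simp [eq_neg_iff_add_eq_zero]
  simp only [key, zero_add]
  simp only [sub_mul, mul_sub, one_mul, mul_one, Finset.sum_sub_distrib,
    mul_ite, ite_mul, mul_zero, zero_mul, Finset.sum_ite_eq', Finset.mem_univ,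
    if_true, Finset.sum_const, Finset.card_univ, ZMod.card, nsmul_eq_mul, mul_one,
    neg_inj, neg_eq_zero, sub_eq_zero]
  have hQ : ((-a : ZMod p) = 0) = (a = 0) := by simp
  rcases eq_or_ne a b with h | h
  · simp only [h, if_pos rfl]
    ring
  · rw [if_neg h, if_neg fun hh => h hh.symm]
    ring
end

section
/- Define ψ(n1, n2, r) := Σ_{u mod r, gcd(u,r)=1} R(u + n1, r) · R(u + n2, r). Then for every prime p, every integer α ≥ 2, and all integers n1, n2: ψ(n1, n2, p^α) = 0 if p | n1·n2, and ψ(n1, n2, p^α) = p^α · R(n1 − n2, p^α) if p ∤ n1·n2. -/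
open Finset

namespace Aux12

noncomputable def ec (q : ℕ) [NeZero q] : AddChar (ZMod q) ℂ :=
  AddChar.zmodChar q (ζ := Complex.exp (2 * Real.pi * Complex.I / q)) (by
    rw [← Complex.exp_nat_mul, mul_div_cancel₀ _ (by exact_mod_cast (NeZero.ne q) : (q : ℂ) ≠ 0),
      Complex.exp_two_pi_mul_I])

lemma ec_apply (q : ℕ) [NeZero q] (x : ZMod q) : ec q x = eZMod q x := by
  rw [ec, AddChar.zmodChar_apply, ← Complex.exp_nat_mul, eZMod]
  congr 1
  ring

lemma ec_eq_one_iff (q : ℕ) [NeZero q] (x : ZMod q) : ec q x = 1 ↔ x = 0 := by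
  rw [ec, AddChar.zmodChar_apply,
    (Complex.isPrimitiveRoot_exp q (NeZero.ne q)).pow_eq_one_iff_dvd]
  constructor
  · intro h
    exact (ZMod.val_eq_zero x).mp (Nat.eq_zero_of_dvd_of_lt h (ZMod.val_lt x))
  · rintro rfl
    simp

lemma geom (z : ℂ) (m : ℕ) (h : z ^ m = 1) :
    ∑ k ∈ range m, z ^ k = if z = 1 then (m : ℂ) else 0 := by
  split_ifs with h1
  · simp [h1]
  · rw [geom_sum_eq h1, h, sub_self, zero_div]

lemma sum_zmod (q : ℕ) [NeZero q] (f : ZMod q → ℂ) :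
    ∑ x : ZMod q, f x = ∑ k ∈ range q, f (k : ZMod q) := by
  refine Finset.sum_nbij' (fun x => x.val) (fun k => (k : ZMod q)) ?_ ?_ ?_ ?_ ?_
  · intro a _; exact mem_range.mpr (ZMod.val_lt a)
  · intro a _; exact mem_univ _
  · intro a _; exact ZMod.natCast_rightInverse a
  · intro a ha; exact ZMod.val_cast_of_lt (mem_range.mp ha)
  · intro a _; rw [ZMod.natCast_rightInverse a]

lemma units_to_filter (q : ℕ) [NeZero q] (f : ZMod q → ℂ) :
    ∑ x ∈ univ.filter (fun x : ZMod q => IsUnit x), f x = ∑ u : (ZMod q)ˣ, f u := by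
  refine Finset.sum_bij (i := fun x hx => ((mem_filter.mp hx).2.unit)) ?_ ?_ ?_ ?_
  · intro a ha; exact mem_univ _
  · intro a ha b hb hab
    have := congrArg (fun u : (ZMod q)ˣ => (u : ZMod q)) hab
    simpa [IsUnit.unit_spec] using this
  · intro u _
    refine ⟨(u : ZMod q), mem_filter.mpr ⟨mem_univ _, u.isUnit⟩, ?_⟩
    exact Units.ext (by simp [IsUnit.unit_spec])
  · intro a ha; rw [IsUnit.unit_spec]

lemma filter_to_units (q : ℕ) [NeZero q] (f : ZMod q → ℂ) :
    ∑ a ∈ (range q).filter (fun a => Nat.gcd a q = 1), f (a : ZMod q)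
      = ∑ u : (ZMod q)ˣ, f u := by
  rw [← units_to_filter q f]
  refine Finset.sum_nbij' (fun a => (a : ZMod q)) (fun x => x.val) ?_ ?_ ?_ ?_ ?_
  · intro a ha
    rw [mem_filter] at ha
    exact mem_filter.mpr ⟨mem_univ _, (ZMod.isUnit_iff_coprime a q).mpr ha.2⟩
  · intro x hx
    rw [mem_filter] at hx
    refine mem_filter.mpr ⟨mem_range.mpr (ZMod.val_lt x), ?_⟩
    exact (ZMod.isUnit_iff_coprime x.val q).mp (by rw [ZMod.natCast_rightInverse x]; exact hx.2)
  · intro a ha; exact ZMod.val_cast_of_lt (mem_range.mp (mem_filter.mp ha).1)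
  · intro x _; exact ZMod.natCast_rightInverse x
  · intro a _; rfl

lemma R_eq (q : ℕ) [NeZero q] (n : ZMod q) :
    ramanujanS q n = ∑ u : (ZMod q)ˣ, ec q (↑u * n) := by
  rw [ramanujanS, ← filter_to_units q (fun x => ec q (x * n))]
  exact Finset.sum_congr rfl fun a _ => (ec_apply q _).symm


lemma full_sum (q : ℕ) [NeZero q] (c : ZMod q) :
    ∑ x : ZMod q, ec q (x * c) = if c = 0 then (q : ℂ) else 0 := by
  rw [sum_zmod]
  have hterm : ∀ k ∈ range q, ec q ((k : ZMod q) * c) = (ec q c) ^ k := by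
    intro k _
    rw [← AddChar.map_nsmul_eq_pow, nsmul_eq_mul]
  have hz : (ec q c) ^ q = 1 := by
    rw [← AddChar.map_nsmul_eq_pow, nsmul_eq_mul, ZMod.natCast_self, zero_mul,
      AddChar.map_zero_eq_one]
  rw [Finset.sum_congr rfl hterm, geom _ _ hz]
  simp only [ec_eq_one_iff]

section PrimePow

variable (p α : ℕ)

lemma isUnit_iff (hp : p.Prime) (hα : 2 ≤ α) [NeZero (p ^ α)] (x : ZMod (p ^ α)) : IsUnit x ↔ ¬ p ∣ x.val := by
  conv_lhs => rw [← ZMod.natCast_rightInverse x]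
  rw [ZMod.isUnit_iff_coprime, Nat.coprime_pow_right_iff (by omega : 0 < α),
    Nat.coprime_comm]
  exact hp.coprime_iff_not_dvd

lemma sum_nonunits (hp : p.Prime) (hα : 2 ≤ α) [NeZero (p ^ α)] (f : ZMod (p ^ α) → ℂ) :
    ∑ x ∈ univ.filter (fun x : ZMod (p ^ α) => ¬ IsUnit x), f x
      = ∑ k ∈ range (p ^ (α - 1)), f ((p * k : ℕ) : ZMod (p ^ α)) := by
  have hlt : ∀ k ∈ range (p ^ (α - 1)), p * k < p ^ α := by
    intro k hk
    calc p * k < p * p ^ (α - 1) :=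
      (Nat.mul_lt_mul_left hp.pos).mpr (mem_range.mp hk)
    _ = p ^ α := by rw [← pow_succ']; congr 1; omega
  refine Finset.sum_nbij' (fun x => x.val / p) (fun k => ((p * k : ℕ) : ZMod (p ^ α)))
    ?_ ?_ ?_ ?_ ?_
  · intro x hx
    rw [mem_filter, isUnit_iff p α hp hα, not_not] at hx
    refine mem_range.mpr (Nat.div_lt_of_lt_mul ?_)
    calc x.val < p ^ α := ZMod.val_lt x
    _ = p * p ^ (α - 1) := by rw [← pow_succ']; congr 1; omega
  · intro k hk
    rw [mem_filter]
    refine ⟨mem_univ _, ?_⟩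
    rw [isUnit_iff p α hp hα, not_not, ZMod.val_cast_of_lt (hlt k hk)]
    exact dvd_mul_right p k
  · intro x hx
    rw [mem_filter, isUnit_iff p α hp hα, not_not] at hx
    show ((p * (x.val / p) : ℕ) : ZMod (p ^ α)) = x
    rw [Nat.mul_div_cancel' hx.2, ZMod.natCast_rightInverse x]
  · intro k hk
    show ((p * k : ℕ) : ZMod (p ^ α)).val / p = k
    rw [ZMod.val_cast_of_lt (hlt k hk), Nat.mul_div_cancel_left k hp.pos]
  · intro x hx
    rw [mem_filter, isUnit_iff p α hp hα, not_not] at hx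
    rw [Nat.mul_div_cancel' hx.2, ZMod.natCast_rightInverse x]

lemma S_eval (hp : p.Prime) (hα : 2 ≤ α) [NeZero (p ^ α)] (c : ZMod (p ^ α)) :
    ∑ u : (ZMod (p ^ α))ˣ, ec (p ^ α) (↑u * c)
      = (if c = 0 then ((p ^ α : ℕ) : ℂ) else 0)
        - (if (p : ZMod (p ^ α)) * c = 0 then ((p ^ (α - 1) : ℕ) : ℂ) else 0) := by
  have hsplit := Finset.sum_filter_add_sum_filter_not univ
    (fun x : ZMod (p ^ α) => IsUnit x) (fun x => ec (p ^ α) (x * c))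
  rw [units_to_filter (p ^ α) (fun x => ec (p ^ α) (x * c))] at hsplit
  have h2 : ∑ x ∈ univ.filter (fun x : ZMod (p ^ α) => ¬ IsUnit x), ec (p ^ α) (x * c)
      = if (p : ZMod (p ^ α)) * c = 0 then ((p ^ (α - 1) : ℕ) : ℂ) else 0 := by
    rw [sum_nonunits p α hp hα]
    have hterm : ∀ k ∈ range (p ^ (α - 1)),
        ec (p ^ α) (((p * k : ℕ) : ZMod (p ^ α)) * c)
          = (ec (p ^ α) ((p : ZMod (p ^ α)) * c)) ^ k := by
      intro k _
      rw [← AddChar.map_nsmul_eq_pow, nsmul_eq_mul]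
      congr 1
      push_cast
      ring
    have hz : (ec (p ^ α) ((p : ZMod (p ^ α)) * c)) ^ (p ^ (α - 1)) = 1 := by
      rw [← AddChar.map_nsmul_eq_pow, nsmul_eq_mul, ← mul_assoc]
      have hh : ((p ^ (α - 1) : ℕ) : ZMod (p ^ α)) * (p : ZMod (p ^ α))
          = ((p ^ α : ℕ) : ZMod (p ^ α)) := by
        push_cast
        rw [← pow_succ]
        congr 1
        omega
      rw [hh, ZMod.natCast_self, zero_mul, AddChar.map_zero_eq_one]
    rw [Finset.sum_congr rfl hterm, geom _ _ hz]
    simp only [ec_eq_one_iff]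
  have h1 := full_sum (p ^ α) c
  have : ∑ u : (ZMod (p ^ α))ˣ, ec (p ^ α) (↑u * c)
      = (∑ x : ZMod (p ^ α), ec (p ^ α) (x * c))
        - ∑ x ∈ univ.filter (fun x : ZMod (p ^ α) => ¬ IsUnit x), ec (p ^ α) (x * c) := by
    rw [← hsplit]; ring
  rw [this, h1, h2]

lemma isUnit_iff_map (hp : p.Prime) (hα : 2 ≤ α) [NeZero (p ^ α)] (x : ZMod (p ^ α)) :
    IsUnit x ↔ (ZMod.castHom (dvd_pow_self p (by omega : α ≠ 0)) (ZMod p)) x ≠ 0 := by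
  rw [isUnit_iff p α hp hα, ZMod.castHom_apply, ← ZMod.natCast_val, Ne,
    ZMod.natCast_eq_zero_iff]

lemma T_eval (hp : p.Prime) (hα : 2 ≤ α) [NeZero (p ^ α)] (a : (ZMod (p ^ α))ˣ)
    (m2 : ZMod (p ^ α)) :
    ∑ x ∈ univ.filter
        (fun x : ZMod (p ^ α) => IsUnit x ∧ (p : ZMod (p ^ α)) * (↑a + x) = 0),
        ec (p ^ α) (x * m2)
      = ec (p ^ α) (-↑a * m2) *
          (if ((p ^ (α - 1) : ℕ) : ZMod (p ^ α)) * m2 = 0 then (p : ℂ) else 0) := by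
  have hppos : 0 < p ^ (α - 1) := pow_pos hp.pos _
  have hlt : ∀ t ∈ range p, p ^ (α - 1) * t < p ^ α := by
    intro t ht
    calc p ^ (α - 1) * t < p ^ (α - 1) * p :=
      (Nat.mul_lt_mul_left hppos).mpr (mem_range.mp ht)
    _ = p ^ α := by rw [← pow_succ]; congr 1; omega
  have hdvd : ∀ x : ZMod (p ^ α), (p : ZMod (p ^ α)) * (↑a + x) = 0 →
      p ^ (α - 1) ∣ (↑a + x).val := by
    intro x hx
    set v := (↑a + x).val with hv
    have h0 : ((p * v : ℕ) : ZMod (p ^ α)) = 0 := by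
      push_cast
      rw [hv, ZMod.natCast_val, ZMod.cast_id]
      exact hx
    rw [ZMod.natCast_eq_zero_iff] at h0
    have : p * p ^ (α - 1) ∣ p * v := by
      rw [show p * p ^ (α - 1) = p ^ α from by rw [← pow_succ']; congr 1; omega]
      exact h0
    exact (mul_dvd_mul_iff_left hp.ne_zero).mp this
  rw [Finset.sum_nbij' (i := fun x : ZMod (p ^ α) => (↑a + x).val / p ^ (α - 1))
    (j := fun t : ℕ => -↑a + ((p ^ (α - 1) * t : ℕ) : ZMod (p ^ α)))
    (t := range p)
    (g := fun t : ℕ => ec (p ^ α) ((-↑a + ((p ^ (α - 1) * t : ℕ) : ZMod (p ^ α))) * m2))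
    ?_ ?_ ?_ ?_ ?_]
  · have hterm : ∀ t ∈ range p,
        ec (p ^ α) ((-↑a + ((p ^ (α - 1) * t : ℕ) : ZMod (p ^ α))) * m2)
          = ec (p ^ α) (-↑a * m2) *
            (ec (p ^ α) (((p ^ (α - 1) : ℕ) : ZMod (p ^ α)) * m2)) ^ t := by
      intro t _
      rw [← AddChar.map_nsmul_eq_pow, ← AddChar.map_add_eq_mul, nsmul_eq_mul]
      congr 1
      push_cast
      ring
    have hz : (ec (p ^ α) (((p ^ (α - 1) : ℕ) : ZMod (p ^ α)) * m2)) ^ p = 1 := by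
      rw [← AddChar.map_nsmul_eq_pow, nsmul_eq_mul, ← mul_assoc]
      have hh : (p : ZMod (p ^ α)) * ((p ^ (α - 1) : ℕ) : ZMod (p ^ α))
          = ((p ^ α : ℕ) : ZMod (p ^ α)) := by
        push_cast
        rw [← pow_succ']
        congr 1
        omega
      rw [hh, ZMod.natCast_self, zero_mul, AddChar.map_zero_eq_one]
    rw [Finset.sum_congr rfl hterm, ← Finset.mul_sum, geom _ _ hz]
    simp only [ec_eq_one_iff]
  · intro x hx
    rw [mem_filter] at hx
    refine mem_range.mpr (Nat.div_lt_of_lt_mul ?_)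
    calc (↑a + x).val < p ^ α := ZMod.val_lt _
    _ = p ^ (α - 1) * p := by rw [← pow_succ]; congr 1; omega
  · intro t ht
    rw [mem_filter]
    constructor
    · exact mem_univ _
    constructor
    · rw [isUnit_iff_map p α hp hα]
      rw [map_add, map_neg]
      have h1 : (ZMod.castHom (dvd_pow_self p (by omega : α ≠ 0)) (ZMod p))
          ((p ^ (α - 1) * t : ℕ) : ZMod (p ^ α)) = 0 := by
        rw [map_natCast, ZMod.natCast_eq_zero_iff]
        exact Dvd.dvd.mul_right (dvd_pow_self p (by omega : α - 1 ≠ 0)) t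
      rw [h1, add_zero, neg_ne_zero]
      have := (isUnit_iff_map p α hp hα (↑a : ZMod (p ^ α))).mp a.isUnit
      exact this
    · rw [add_neg_cancel_left]
      have : (p : ZMod (p ^ α)) * ((p ^ (α - 1) * t : ℕ) : ZMod (p ^ α))
          = ((p ^ α * t : ℕ) : ZMod (p ^ α)) := by
        push_cast
        rw [← mul_assoc, ← pow_succ']
        congr 2
        omega
      rw [this, Nat.cast_mul, ZMod.natCast_self, zero_mul]
  · intro x hx
    rw [mem_filter] at hx
    show -↑a + ((p ^ (α - 1) * ((↑a + x).val / p ^ (α - 1)) : ℕ) : ZMod (p ^ α)) = x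
    rw [Nat.mul_div_cancel' (hdvd x hx.2.2), ZMod.natCast_rightInverse, neg_add_cancel_left]
  · intro t ht
    show (↑a + (-↑a + ((p ^ (α - 1) * t : ℕ) : ZMod (p ^ α)))).val / p ^ (α - 1) = t
    rw [add_neg_cancel_left, ZMod.val_cast_of_lt (hlt t ht), Nat.mul_div_cancel_left t hppos]
  · intro x hx
    rw [mem_filter] at hx
    show ec (p ^ α) (x * m2) = ec (p ^ α)
      ((-↑a + ((p ^ (α - 1) * ((↑a + x).val / p ^ (α - 1)) : ℕ) : ZMod (p ^ α))) * m2)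
    rw [Nat.mul_div_cancel' (hdvd x hx.2.2), ZMod.natCast_rightInverse, neg_add_cancel_left]

end PrimePow

end Aux12


open Aux12

/-- For a prime `p`, `α ≥ 2` and integers `n1, n2`:
`ψ(n1, n2, p^α) = 0` if `p ∣ n1·n2`, and `ψ(n1, n2, p^α) = p^α·R(n1 − n2, p^α)` otherwise. -/
theorem stmt12 (p : ℕ) (hp : p.Prime) (α : ℕ) (hα : 2 ≤ α) (n1 n2 : ℤ) :
    psiSum n1 n2 (p ^ α) =
      if (p : ℤ) ∣ n1 * n2 then 0
      else ((p : ℂ) ^ α) * ramanujanS (p ^ α) ((n1 - n2 : ℤ) : ZMod (p ^ α)) := by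
  haveI : NeZero (p ^ α) := ⟨(pow_pos hp.pos α).ne'⟩
  have hpz : Prime (p : ℤ) := by rw [Int.prime_iff_natAbs_prime]; simpa using hp
  have hpzne : (p : ℤ) ≠ 0 := by exact_mod_cast hp.ne_zero
  -- abbreviations
  have hcast : ((n1 : ZMod (p ^ α)) - (n2 : ZMod (p ^ α)))
      = ((n1 - n2 : ℤ) : ZMod (p ^ α)) := by push_cast; ring
  -- R' : the Ramanujan-type sum over units
  have hpsi : psiSum n1 n2 (p ^ α) =
      (∑ a : (ZMod (p ^ α))ˣ, ec (p ^ α) (↑a * ((n1 : ZMod (p ^ α)) - (n2 : ZMod (p ^ α)))))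
        * ((p ^ α : ℕ) : ℂ)
      - (∑ a : (ZMod (p ^ α))ˣ, ec (p ^ α) (↑a * ((n1 : ZMod (p ^ α)) - (n2 : ZMod (p ^ α)))))
        * (if ((p ^ (α - 1) : ℕ) : ZMod (p ^ α)) * (n2 : ZMod (p ^ α)) = 0 then (p : ℂ) else 0)
        * ((p ^ (α - 1) : ℕ) : ℂ) := by
    rw [psiSum, filter_to_units (p ^ α) (fun x => ramanujanS (p ^ α) (x + (n1 : ZMod (p ^ α)))
      * ramanujanS (p ^ α) (x + (n2 : ZMod (p ^ α))))]
    have e1 : ∀ u : (ZMod (p ^ α))ˣ,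
        ramanujanS (p ^ α) (↑u + (n1 : ZMod (p ^ α)))
          * ramanujanS (p ^ α) (↑u + (n2 : ZMod (p ^ α)))
        = ∑ a : (ZMod (p ^ α))ˣ, ∑ b : (ZMod (p ^ α))ˣ,
            ec (p ^ α) (↑a * (n1 : ZMod (p ^ α)) + ↑b * (n2 : ZMod (p ^ α)))
              * ec (p ^ α) (↑u * (↑a + ↑b)) := by
      intro u
      rw [R_eq, R_eq, Finset.sum_mul_sum]
      refine Finset.sum_congr rfl fun a _ => Finset.sum_congr rfl fun b _ => ?_
      rw [← AddChar.map_add_eq_mul, ← AddChar.map_add_eq_mul]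
      congr 1
      ring
    rw [Finset.sum_congr rfl fun u _ => e1 u]
    rw [Finset.sum_comm]
    rw [show (∑ a : (ZMod (p ^ α))ˣ, ∑ u : (ZMod (p ^ α))ˣ, ∑ b : (ZMod (p ^ α))ˣ,
        ec (p ^ α) (↑a * (n1 : ZMod (p ^ α)) + ↑b * (n2 : ZMod (p ^ α)))
          * ec (p ^ α) (↑u * (↑a + ↑b)))
      = ∑ a : (ZMod (p ^ α))ˣ, ∑ b : (ZMod (p ^ α))ˣ, ∑ u : (ZMod (p ^ α))ˣ,
        ec (p ^ α) (↑a * (n1 : ZMod (p ^ α)) + ↑b * (n2 : ZMod (p ^ α)))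
          * ec (p ^ α) (↑u * (↑a + ↑b)) from
      Finset.sum_congr rfl fun a _ => Finset.sum_comm]
    have e2 : ∀ a b : (ZMod (p ^ α))ˣ,
        (∑ u : (ZMod (p ^ α))ˣ,
          ec (p ^ α) (↑a * (n1 : ZMod (p ^ α)) + ↑b * (n2 : ZMod (p ^ α)))
            * ec (p ^ α) (↑u * (↑a + ↑b)))
        = (if (↑a + ↑b : ZMod (p ^ α)) = 0 then
              ec (p ^ α) (↑a * (n1 : ZMod (p ^ α)) + ↑b * (n2 : ZMod (p ^ α)))
                * ((p ^ α : ℕ) : ℂ) else 0)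
          - (if (p : ZMod (p ^ α)) * (↑a + ↑b) = 0 then
              ec (p ^ α) (↑a * (n1 : ZMod (p ^ α)) + ↑b * (n2 : ZMod (p ^ α)))
                * ((p ^ (α - 1) : ℕ) : ℂ) else 0) := by
      intro a b
      rw [← Finset.mul_sum, S_eval p α hp hα (↑a + ↑b)]
      simp only [mul_sub, mul_ite, mul_zero]
    rw [Finset.sum_congr rfl fun a _ => Finset.sum_congr rfl fun b _ => e2 a b]
    simp only [Finset.sum_sub_distrib]
    congr 1
    · -- first piece
      have eA : ∀ a : (ZMod (p ^ α))ˣ,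
          (∑ b : (ZMod (p ^ α))ˣ, if (↑a + ↑b : ZMod (p ^ α)) = 0 then
              ec (p ^ α) (↑a * (n1 : ZMod (p ^ α)) + ↑b * (n2 : ZMod (p ^ α)))
                * ((p ^ α : ℕ) : ℂ) else 0)
          = ec (p ^ α) (↑a * ((n1 : ZMod (p ^ α)) - (n2 : ZMod (p ^ α)))) * ((p ^ α : ℕ) : ℂ) := by
        intro a
        rw [Finset.sum_eq_single (-a)]
        · rw [if_pos (by rw [Units.val_neg]; ring), Units.val_neg]
          congr 2
          ring
        · intro b _ hb
          rw [if_neg]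
          intro h
          exact hb (by
            have : (↑b : ZMod (p ^ α)) = -↑a := eq_neg_of_add_eq_zero_right h
            exact Units.ext (by rw [this, ← Units.val_neg]))
        · intro h
          exact absurd (Finset.mem_univ _) h
      rw [Finset.sum_congr rfl fun a _ => eA a, ← Finset.sum_mul]
    · -- second piece
      have eB : ∀ a : (ZMod (p ^ α))ˣ,
          (∑ b : (ZMod (p ^ α))ˣ, if (p : ZMod (p ^ α)) * (↑a + ↑b) = 0 then
              ec (p ^ α) (↑a * (n1 : ZMod (p ^ α)) + ↑b * (n2 : ZMod (p ^ α)))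
                * ((p ^ (α - 1) : ℕ) : ℂ) else 0)
          = ec (p ^ α) (↑a * ((n1 : ZMod (p ^ α)) - (n2 : ZMod (p ^ α))))
              * (if ((p ^ (α - 1) : ℕ) : ZMod (p ^ α)) * (n2 : ZMod (p ^ α)) = 0
                  then (p : ℂ) else 0)
              * ((p ^ (α - 1) : ℕ) : ℂ) := by
        intro a
        rw [← units_to_filter (p ^ α) (fun x => if (p : ZMod (p ^ α)) * (↑a + x) = 0 then
            ec (p ^ α) (↑a * (n1 : ZMod (p ^ α)) + x * (n2 : ZMod (p ^ α)))
              * ((p ^ (α - 1) : ℕ) : ℂ) else 0)]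
        rw [← Finset.sum_filter, Finset.filter_filter, ← Finset.sum_mul]
        have : (∑ x ∈ Finset.univ.filter (fun x : ZMod (p ^ α) =>
              IsUnit x ∧ (p : ZMod (p ^ α)) * (↑a + x) = 0),
            ec (p ^ α) (↑a * (n1 : ZMod (p ^ α)) + x * (n2 : ZMod (p ^ α))))
            = ec (p ^ α) (↑a * (n1 : ZMod (p ^ α))) *
              ∑ x ∈ Finset.univ.filter (fun x : ZMod (p ^ α) =>
                IsUnit x ∧ (p : ZMod (p ^ α)) * (↑a + x) = 0),
                ec (p ^ α) (x * (n2 : ZMod (p ^ α))) := by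
          rw [Finset.mul_sum]
          exact Finset.sum_congr rfl fun x _ => AddChar.map_add_eq_mul _ _ _
        rw [this, T_eval p α hp hα a (n2 : ZMod (p ^ α)), ← mul_assoc,
          ← AddChar.map_add_eq_mul]
        congr 2
        ring
      rw [Finset.sum_congr rfl fun a _ => eB a, ← Finset.sum_mul, ← Finset.sum_mul]
  -- condition on the p^{α-1} term
  have hcond2 : (((p ^ (α - 1) : ℕ) : ZMod (p ^ α)) * (n2 : ZMod (p ^ α)) = 0)
      ↔ (p : ℤ) ∣ n2 := by
    rw [show ((p ^ (α - 1) : ℕ) : ZMod (p ^ α)) * ((n2 : ℤ) : ZMod (p ^ α))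
        = (((p : ℤ) ^ (α - 1) * n2 : ℤ) : ZMod (p ^ α)) from by push_cast; ring]
    rw [ZMod.intCast_zmod_eq_zero_iff_dvd]
    rw [show ((p ^ α : ℕ) : ℤ) = (p : ℤ) ^ (α - 1) * p from by
      push_cast; rw [← pow_succ]; congr 1; omega]
    rw [mul_dvd_mul_iff_left (pow_ne_zero _ hpzne)]
  by_cases hd2 : (p : ℤ) ∣ n2
  · rw [if_pos (Dvd.dvd.mul_left hd2 n1), hpsi, if_pos (hcond2.mpr hd2)]
    rw [show ((p ^ α : ℕ) : ℂ) = (p : ℂ) * ((p ^ (α - 1) : ℕ) : ℂ) from by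
      push_cast; rw [← pow_succ']; congr 1; omega]
    ring
  · rw [hpsi, if_neg (fun h => hd2 (hcond2.mp h)), mul_zero, zero_mul, sub_zero]
    by_cases hd1 : (p : ℤ) ∣ n1
    · rw [if_pos (hd1.mul_right n2)]
      have hnd : ¬ (p : ℤ) ∣ (n1 - n2) := by
        intro h
        exact hd2 (by have := dvd_sub hd1 h; simpa using this)
      have hR0 : (∑ a : (ZMod (p ^ α))ˣ,
          ec (p ^ α) (↑a * ((n1 : ZMod (p ^ α)) - (n2 : ZMod (p ^ α))))) = 0 := by
        rw [S_eval p α hp hα, if_neg, if_neg, sub_zero]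
        · -- p * (m1 - m2) ≠ 0
          rw [hcast]
          intro h
          rw [show (p : ZMod (p ^ α)) * ((n1 - n2 : ℤ) : ZMod (p ^ α))
              = (((p : ℤ) * (n1 - n2) : ℤ) : ZMod (p ^ α)) from by push_cast; ring,
            ZMod.intCast_zmod_eq_zero_iff_dvd,
            show ((p ^ α : ℕ) : ℤ) = (p : ℤ) * (p : ℤ) ^ (α - 1) from by
              push_cast; rw [← pow_succ']; congr 1; omega,
            mul_dvd_mul_iff_left hpzne] at h
          exact hnd (dvd_trans (dvd_pow_self (p : ℤ) (by omega : α - 1 ≠ 0)) h)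
        · -- m1 - m2 ≠ 0
          rw [hcast]
          intro h
          rw [ZMod.intCast_zmod_eq_zero_iff_dvd] at h
          refine hnd (dvd_trans ?_ h)
          exact_mod_cast dvd_pow_self (p : ℤ) (by omega : α ≠ 0)
      rw [hR0, zero_mul]
    · rw [if_neg (fun h => (hpz.dvd_mul.mp h).elim hd1 hd2)]
      rw [hcast, R_eq]
      push_cast
      ring
end
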